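/- arXiv:2604.13916 — 3 statements merged into one kernel-verified Lean document; each statement's English description precedes it below -/
import Mathlib

section
/- Let C be a ℤ≥0-filtered algebra over a field k such that d(ab) = d(a) + d(b) for all nonzero a, b ∈ C (where d denotes the filtration degree). If for every n the k-vector space Gr(C)_n = C_n / C_{n-1} is 0- or 1-dimensional, then C is commutative. -/
/-- The degree of an element with respect to a filtration: the least index `i`
with `a ∈ F i`. -/
noncomputable def fdeg {k C : Type*} [Field k] [Ring C] [Algebra k C]
    (F : ℕ → Submodule k C) (a : C) : ℕ := sInf {i | a ∈ F i}

namespace BergmanAux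

variable {k C : Type*} [Field k] [Ring C] [Algebra k C]

/-- ℤ-indexed extension of the filtration, `⊥` in negative degrees. -/
noncomputable def Fm (F : ℕ → Submodule k C) (z : ℤ) : Submodule k C :=
  if 0 ≤ z then F z.toNat else ⊥

variable {F : ℕ → Submodule k C}

lemma Fm_coe (n : ℕ) : Fm F (n : ℤ) = F n := by simp [Fm]

lemma Fm_neg {z : ℤ} (h : z < 0) : Fm F z = ⊥ := by simp [Fm, not_le.mpr h]

lemma Fm_mono (hmono : Monotone F) {z z' : ℤ} (h : z ≤ z') : Fm F z ≤ Fm F z' := by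
  by_cases h0 : 0 ≤ z
  · rw [Fm, if_pos h0, Fm, if_pos (h0.trans h)]
    exact hmono (by omega)
  · rw [Fm_neg (by omega)]; exact bot_le

lemma Fm_mul (hmul : ∀ i j : ℕ, ∀ a ∈ F i, ∀ b ∈ F j, a * b ∈ F (i + j))
    {x y : C} {i j : ℤ} (hx : x ∈ Fm F i) (hy : y ∈ Fm F j) :
    x * y ∈ Fm F (i + j) := by
  by_cases hi : 0 ≤ i
  · by_cases hj : 0 ≤ j
    · rw [Fm, if_pos hi] at hx
      rw [Fm, if_pos hj] at hy
      have h := hmul _ _ _ hx _ hy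
      rw [Fm, if_pos (by omega)]
      have : (i + j).toNat = i.toNat + j.toNat := by omega
      rw [this]; exact h
    · rw [Fm_neg (by omega), Submodule.mem_bot] at hy
      subst hy; rw [mul_zero]; exact zero_mem _
  · rw [Fm_neg (by omega), Submodule.mem_bot] at hx
    subst hx; rw [zero_mul]; exact zero_mem _

lemma fdeg_mem (hcover : ∀ a : C, ∃ i, a ∈ F i) (a : C) : a ∈ F (fdeg F a) :=
  Nat.sInf_mem (hcover a)

lemma fdeg_le {a : C} {i : ℕ} (h : a ∈ F i) : fdeg F a ≤ i := Nat.sInf_le h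

lemma fdeg_one (hone : (1 : C) ∈ F 0) : fdeg F (1 : C) = 0 :=
  Nat.le_zero.mp (fdeg_le hone)

lemma fdeg_zero : fdeg F (0 : C) = 0 :=
  Nat.le_zero.mp (fdeg_le (zero_mem _))

lemma not_mem_Fm {a : C} (ha : a ≠ 0) {z : ℤ} (hz : z < (fdeg F a : ℤ)) :
    a ∉ Fm F z := by
  by_cases h0 : 0 ≤ z
  · rw [Fm, if_pos h0]
    intro hmem
    have := fdeg_le hmem
    omega
  · rw [Fm_neg (by omega), Submodule.mem_bot]
    exact ha

lemma mem_Fm_fdeg (hcover : ∀ a : C, ∃ i, a ∈ F i) (a : C) :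
    a ∈ Fm F (fdeg F a : ℤ) := by rw [Fm_coe]; exact fdeg_mem hcover a

lemma exists_smul_of_rank_le_one {M : Type*} [AddCommGroup M] [Module k M]
    (h : Module.rank k M ≤ 1) (y x : M) (hy : y ≠ 0) : ∃ c : k, x = c • y := by
  obtain ⟨v, hv⟩ := rank_le_one_iff.mp h
  obtain ⟨r, hr⟩ := hv x
  obtain ⟨s, hs⟩ := hv y
  have hs0 : s ≠ 0 := by rintro rfl; rw [zero_smul] at hs; exact hy hs.symm
  refine ⟨r * s⁻¹, ?_⟩
  rw [← hr, ← hs, smul_smul, mul_assoc, inv_mul_cancel₀ hs0, mul_one]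

lemma mem_F0 (h1 : (1 : C) ≠ 0) (hone : (1 : C) ∈ F 0)
    (hdim0 : Module.rank k ↥(F 0) ≤ 1) {x : C} (hx : x ∈ F 0) :
    ∃ α : k, x = α • 1 := by
  have hy : (⟨1, hone⟩ : ↥(F 0)) ≠ 0 := by
    intro h; exact h1 (congrArg Subtype.val h)
  obtain ⟨c, hc⟩ := exists_smul_of_rank_le_one hdim0 (⟨1, hone⟩ : ↥(F 0)) ⟨x, hx⟩ hy
  exact ⟨c, congrArg Subtype.val hc⟩



lemma mul_ne_zero' (hcover : ∀ a : C, ∃ i, a ∈ F i)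
    (hdeg : ∀ a b : C, a ≠ 0 → b ≠ 0 → fdeg F (a * b) = fdeg F a + fdeg F b)
    (h1 : (1 : C) ≠ 0) (hone : (1 : C) ∈ F 0)
    (hdim0 : Module.rank k ↥(F 0) ≤ 1)
    {a b : C} (ha : a ≠ 0) (hb : b ≠ 0) : a * b ≠ 0 := by
  intro h
  have hd := hdeg a b ha hb
  rw [h, fdeg_zero] at hd
  have hma : a ∈ F 0 := by
    have := fdeg_mem hcover a; rwa [(by omega : fdeg F a = 0)] at this
  have hmb : b ∈ F 0 := by
    have := fdeg_mem hcover b; rwa [(by omega : fdeg F b = 0)] at this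
  obtain ⟨α, rfl⟩ := mem_F0 h1 hone hdim0 hma
  obtain ⟨β, rfl⟩ := mem_F0 h1 hone hdim0 hmb
  have hα : α ≠ 0 := fun h0 => ha (by rw [h0, zero_smul])
  have hβ : β ≠ 0 := fun h0 => hb (by rw [h0, zero_smul])
  rw [smul_mul_smul_comm, one_mul] at h
  rcases smul_eq_zero.mp h with h' | h'
  · exact (mul_ne_zero hα hβ) h'
  · exact h1 h'

lemma fdeg_pow (hcover : ∀ a : C, ∃ i, a ∈ F i)
    (hdeg : ∀ a b : C, a ≠ 0 → b ≠ 0 → fdeg F (a * b) = fdeg F a + fdeg F b)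
    (h1 : (1 : C) ≠ 0) (hone : (1 : C) ∈ F 0)
    (hdim0 : Module.rank k ↥(F 0) ≤ 1)
    {a : C} (ha : a ≠ 0) : ∀ j : ℕ, a ^ j ≠ 0 ∧ fdeg F (a ^ j) = j * fdeg F a := by
  intro j
  induction j with
  | zero => exact ⟨by simpa using h1, by simpa using fdeg_one hone⟩
  | succ n ih =>
    have hne : a ^ n * a ≠ 0 := mul_ne_zero' hcover hdeg h1 hone hdim0 ih.1 ha
    constructor
    · rwa [pow_succ]
    · rw [pow_succ, hdeg _ _ ih.1 ha, ih.2]; ring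

/-- one-dimensionality of graded pieces: comparison of elements of equal degree -/
lemma exists_scale (h1 : (1 : C) ≠ 0) (hone : (1 : C) ∈ F 0)
    (hdim0 : Module.rank k ↥(F 0) ≤ 1)
    (hdim : ∀ n : ℕ, Module.rank k
        (↥(F (n + 1)) ⧸ Submodule.comap (F (n + 1)).subtype (F n)) ≤ 1)
    {u u' : C} (t : ℕ) (hu : u ∈ F t) (hu' : u' ∈ F t)
    (hu0 : u ∉ Fm F ((t : ℤ) - 1)) (hu'0 : u' ∉ Fm F ((t : ℤ) - 1)) :
    ∃ lam : k, lam ≠ 0 ∧ u - lam • u' ∈ Fm F ((t : ℤ) - 1) := by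
  cases t with
  | zero =>
    have hune : u ≠ 0 := by
      intro h; exact hu0 (by rw [h]; exact zero_mem _)
    have hu'ne : u' ≠ 0 := by
      intro h; exact hu'0 (by rw [h]; exact zero_mem _)
    obtain ⟨α, rfl⟩ := mem_F0 h1 hone hdim0 hu
    obtain ⟨β, rfl⟩ := mem_F0 h1 hone hdim0 hu'
    have hα : α ≠ 0 := fun h0 => hune (by rw [h0, zero_smul])
    have hβ : β ≠ 0 := fun h0 => hu'ne (by rw [h0, zero_smul])
    refine ⟨α * β⁻¹, mul_ne_zero hα (inv_ne_zero hβ), ?_⟩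
    have : α • (1 : C) - (α * β⁻¹) • β • (1 : C) = 0 := by
      rw [smul_smul, mul_assoc, inv_mul_cancel₀ hβ, mul_one, sub_self]
    rw [this]; exact zero_mem _
  | succ s =>
    set p : Submodule k ↥(F (s + 1)) := Submodule.comap (F (s + 1)).subtype (F s) with hp
    have hq := hdim s
    have hy0 : (Submodule.Quotient.mk (⟨u', hu'⟩ : ↥(F (s + 1))) : _ ⧸ p) ≠ 0 := by
      rw [Ne, Submodule.Quotient.mk_eq_zero]
      intro hmem
      refine hu'0 ?_
      have : ((s : ℤ) + 1) - 1 = (s : ℤ) := by ring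
      rw [Nat.cast_succ, this, Fm_coe]
      exact hmem
    obtain ⟨lam, hlam⟩ := exists_smul_of_rank_le_one hq _
      (Submodule.Quotient.mk (⟨u, hu⟩ : ↥(F (s + 1)))) hy0
    have hin : u - lam • u' ∈ F s := by
      have hz : (Submodule.Quotient.mk ((⟨u, hu⟩ : ↥(F (s + 1))) - lam • ⟨u', hu'⟩) : _ ⧸ p)
          = 0 := by
        rw [Submodule.Quotient.mk_sub, Submodule.Quotient.mk_smul, hlam, sub_self]
      rw [Submodule.Quotient.mk_eq_zero] at hz
      exact hz
    have hcast : ((s : ℤ) + 1) - 1 = (s : ℤ) := by ring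
    refine ⟨lam, ?_, ?_⟩
    · rintro rfl
      rw [zero_smul, sub_zero] at hin
      exact hu0 (by rw [Nat.cast_succ, hcast, Fm_coe]; exact hin)
    · rw [Nat.cast_succ, hcast, Fm_coe]; exact hin

/-- graded-domain cancellation -/
lemma cancel_left (hmono : Monotone F) (hcover : ∀ a : C, ∃ i, a ∈ F i)
    (hdeg : ∀ a b : C, a ≠ 0 → b ≠ 0 → fdeg F (a * b) = fdeg F a + fdeg F b)
    (h1 : (1 : C) ≠ 0) (hone : (1 : C) ∈ F 0)
    (hdim0 : Module.rank k ↥(F 0) ≤ 1)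
    {x y : C} (hx : x ≠ 0) (s : ℕ) (hy : y ∈ F s)
    (hxy : x * y ∈ Fm F ((fdeg F x : ℤ) + s - 1)) : y ∈ Fm F ((s : ℤ) - 1) := by
  by_contra hyn
  have hy0 : y ≠ 0 := by
    intro h; exact hyn (by rw [h]; exact zero_mem _)
  have hdy : fdeg F y = s := by
    have hle := fdeg_le hy
    rcases lt_or_eq_of_le hle with h | h
    · exact absurd (Fm_mono hmono (by omega : ((fdeg F y : ℤ)) ≤ (s : ℤ) - 1)
        (mem_Fm_fdeg hcover y)) hyn
    · exact h
  have hne := mul_ne_zero' hcover hdeg h1 hone hdim0 hx hy0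
  have := hdeg x y hx hy0
  exact not_mem_Fm hne (by omega) hxy

lemma scalar_eq_zero (hcover : ∀ a : C, ∃ i, a ∈ F i)
    {X : C} (hX : X ≠ 0) {α : k} {z : ℤ} (hz : z < (fdeg F X : ℤ))
    (h : α • X ∈ Fm F z) : α = 0 := by
  by_contra hα
  have h2 : α⁻¹ • (α • X) ∈ Fm F z := Submodule.smul_mem _ _ h
  rw [smul_smul, inv_mul_cancel₀ hα, one_smul] at h2
  exact not_mem_Fm hX hz h2

lemma fdeg_le_of_mem_Fm {x : C} {z : ℤ} (hz : 0 ≤ z) (h : x ∈ Fm F z) :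
    (fdeg F x : ℤ) ≤ z := by
  rw [Fm, if_pos hz] at h
  have := fdeg_le h
  omega

lemma Fm_of_eq {x : C} {i j : ℤ} (h : x ∈ Fm F i) (e : i = j) : x ∈ Fm F j := e ▸ h

/-- `CommDeg N` : every commutator lies `N` below the expected degree. -/
def CommDeg (F : ℕ → Submodule k C) (N : ℕ) : Prop :=
  ∀ a b : C, a ≠ 0 → b ≠ 0 →
    a * b - b * a ∈ Fm F ((fdeg F a : ℤ) + (fdeg F b : ℤ) - (N : ℤ))

section Main
set_option linter.unusedSectionVars false

variable (hmono : Monotone F) (hone : (1 : C) ∈ F 0)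
  (hmul : ∀ i j : ℕ, ∀ a ∈ F i, ∀ b ∈ F j, a * b ∈ F (i + j))
  (hcover : ∀ a : C, ∃ i, a ∈ F i)
  (hdeg : ∀ a b : C, a ≠ 0 → b ≠ 0 → fdeg F (a * b) = fdeg F a + fdeg F b)
  (hdim0 : Module.rank k ↥(F 0) ≤ 1)
  (hdim : ∀ n : ℕ, Module.rank k
      (↥(F (n + 1)) ⧸ Submodule.comap (F (n + 1)).subtype (F n)) ≤ 1)
  (h1 : (1 : C) ≠ 0)

include hmono hone hmul hcover hdeg hdim0 hdim h1

/-- commuting with scalars (degree-zero elements) -/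
lemma comm_scalar {a b : C} (hb : b ≠ 0) (ha0 : fdeg F a = 0) : a * b = b * a := by
  have hma : a ∈ F 0 := by have := fdeg_mem hcover a; rwa [ha0] at this
  obtain ⟨α, rfl⟩ := mem_F0 h1 hone hdim0 hma
  rw [smul_mul_assoc, mul_smul_comm, one_mul, mul_one]

lemma base : CommDeg F 1 := by
  intro a b ha hb
  set m := fdeg F a with hm
  set n := fdeg F b with hn
  by_cases hm0 : m = 0
  · rw [comm_scalar hmono hone hmul hcover hdeg hdim0 hdim h1 hb hm0, sub_self]
    exact zero_mem _
  by_cases hn0 : n = 0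
  · rw [← comm_scalar hmono hone hmul hcover hdeg hdim0 hdim h1 ha hn0, sub_self]
    exact zero_mem _
  -- now m, n ≥ 1
  have hab := mul_ne_zero' hcover hdeg h1 hone hdim0 ha hb
  have hba := mul_ne_zero' hcover hdeg h1 hone hdim0 hb ha
  have hdab : fdeg F (a * b) = m + n := hdeg a b ha hb
  have hdba : fdeg F (b * a) = m + n := by rw [hdeg b a hb ha]; ring
  obtain ⟨c, hc0, hc⟩ := exists_scale h1 hone hdim0 hdim (m + n)
    (by have := fdeg_mem hcover (a * b); rwa [hdab] at this)
    (by have := fdeg_mem hcover (b * a); rwa [hdba] at this)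
    (not_mem_Fm hab (by omega)) (not_mem_Fm hba (by omega))
  -- the at-most-1-dim comparison: a*b - c•(b*a) ∈ Fm (m+n-1)
  -- powers of a : E j
  have E : ∀ j : ℕ, a ^ (j + 1) * b - c ^ (j + 1) • (b * a ^ (j + 1)) ∈
      Fm F (((j : ℤ) + 1) * (m : ℤ) + (n : ℤ) - 1) := by
    intro j
    induction j with
    | zero =>
      simpa [pow_one] using Fm_of_eq hc (by push_cast; ring)
    | succ j ih =>
      have key : a ^ (j + 1 + 1) * b - c ^ (j + 1 + 1) • (b * a ^ (j + 1 + 1)) =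
          a * (a ^ (j + 1) * b - c ^ (j + 1) • (b * a ^ (j + 1))) +
          c ^ (j + 1) • ((a * b - c • (b * a)) * a ^ (j + 1)) := by
        rw [pow_succ' a (j + 1), pow_succ c (j + 1)]
        simp only [mul_sub, sub_mul, smul_sub, mul_smul_comm, smul_mul_assoc,
          smul_smul, mul_assoc]
        abel
      rw [key]
      refine add_mem ?_ (Submodule.smul_mem _ _ ?_)
      · have := Fm_mul hmul (mem_Fm_fdeg hcover a) ih
        exact Fm_of_eq this (by push_cast; ring)
      · have hpw := (fdeg_pow hcover hdeg h1 hone hdim0 ha (j + 1)).2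
        have hmem : a ^ (j + 1) ∈ Fm F (((j : ℤ) + 1) * (m : ℤ)) := by
          have := mem_Fm_fdeg hcover (a ^ (j + 1))
          rw [hpw] at this
          exact Fm_of_eq this (by push_cast; ring)
        have := Fm_mul hmul hc hmem
        exact Fm_of_eq this (by push_cast; ring)
  have E' : ∀ j : ℕ, a * b ^ (j + 1) - c ^ (j + 1) • (b ^ (j + 1) * a) ∈
      Fm F ((m : ℤ) + ((j : ℤ) + 1) * (n : ℤ) - 1) := by
    intro j
    induction j with
    | zero =>
      simpa [pow_one] using Fm_of_eq hc (by push_cast; ring)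
    | succ j ih =>
      have key : a * b ^ (j + 1 + 1) - c ^ (j + 1 + 1) • (b ^ (j + 1 + 1) * a) =
          (a * b ^ (j + 1) - c ^ (j + 1) • (b ^ (j + 1) * a)) * b +
          c ^ (j + 1) • (b ^ (j + 1) * (a * b - c • (b * a))) := by
        rw [pow_succ b (j + 1), pow_succ c (j + 1)]
        simp only [mul_sub, sub_mul, smul_sub, mul_smul_comm, smul_mul_assoc,
          smul_smul, mul_assoc]
        abel
      rw [key]
      refine add_mem ?_ (Submodule.smul_mem _ _ ?_)
      · have := Fm_mul hmul ih (mem_Fm_fdeg hcover b)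
        exact Fm_of_eq this (by push_cast; ring)
      · have hpw := (fdeg_pow hcover hdeg h1 hone hdim0 hb (j + 1)).2
        have hmem : b ^ (j + 1) ∈ Fm F (((j : ℤ) + 1) * (n : ℤ)) := by
          have := mem_Fm_fdeg hcover (b ^ (j + 1))
          rw [hpw] at this
          exact Fm_of_eq this (by push_cast; ring)
        have := Fm_mul hmul hmem hc
        exact Fm_of_eq this (by push_cast; ring)
  -- gcd setup
  set g := Nat.gcd m n with hg
  have hgpos : 0 < g := Nat.gcd_pos_of_pos_left n (by omega)
  obtain ⟨m₁, hm1⟩ := Nat.gcd_dvd_left m n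
  obtain ⟨n₁, hn1⟩ := Nat.gcd_dvd_right m n
  set m' := m / g with hm'def
  set n' := n / g with hn'def
  have hm'eq : m' = m₁ := by rw [hm'def, hm1, Nat.mul_div_cancel_left _ hgpos]
  have hn'eq : n' = n₁ := by rw [hn'def, hn1, Nat.mul_div_cancel_left _ hgpos]
  have hL : m' * n = n' * m := by
    rw [hm'eq, hn'eq]
    conv_lhs => rw [hn1]
    conv_rhs => rw [hm1]
    ring
  have hm'pos : 0 < m' := by
    rcases Nat.eq_zero_or_pos m' with h | h
    · rw [hm'eq] at h; rw [h, Nat.mul_zero] at hm1; omega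
    · exact h
  have hn'pos : 0 < n' := by
    rcases Nat.eq_zero_or_pos n' with h | h
    · rw [hn'eq] at h; rw [h, Nat.mul_zero] at hn1; omega
    · exact h
  set L := n' * m with hLdef
  have hLpos : 0 < L := Nat.mul_pos hn'pos (by omega)
  have hpa := fdeg_pow hcover hdeg h1 hone hdim0 ha n'
  have hpb := fdeg_pow hcover hdeg h1 hone hdim0 hb m'
  have hda : fdeg F (a ^ n') = L := hpa.2
  have hdb : fdeg F (b ^ m') = L := by rw [hpb.2, ← hL]
  obtain ⟨lam, hlam0, hwmem⟩ := exists_scale h1 hone hdim0 hdim L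
    (by have := fdeg_mem hcover (b ^ m'); rwa [hdb] at this)
    (by have := fdeg_mem hcover (a ^ n'); rwa [hda] at this)
    (not_mem_Fm hpb.1 (by omega)) (not_mem_Fm hpa.1 (by omega))
  set w := b ^ m' - lam • a ^ n' with hwdef
  have hba' : b ^ m' = lam • a ^ n' + w := by rw [hwdef]; abel
  -- first side: c ^ n' = 1
  have hS1 : lam • (a ^ n' * b - b * a ^ n') = b * w - w * b := by
    rw [hwdef]
    simp only [mul_sub, sub_mul, smul_sub, mul_smul_comm, smul_mul_assoc]
    have hcomm : b ^ m' * b = b * b ^ m' := by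
      rw [← pow_succ, ← pow_succ']
    rw [hcomm]; abel
  have hX1 : a ^ n' * b - b * a ^ n' ∈ Fm F ((L : ℤ) + (n : ℤ) - 1) := by
    have hmem : lam • (a ^ n' * b - b * a ^ n') ∈ Fm F ((L : ℤ) + (n : ℤ) - 1) := by
      rw [hS1]
      have h1' := Fm_mul hmul (mem_Fm_fdeg hcover b) hwmem
      have h2' := Fm_mul hmul hwmem (mem_Fm_fdeg hcover b)
      exact sub_mem (Fm_of_eq h1' (by push_cast [hn]; ring))
        (Fm_of_eq h2' (by push_cast [hn]; ring))
    have := Submodule.smul_mem _ lam⁻¹ hmem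
    rwa [smul_smul, inv_mul_cancel₀ hlam0, one_smul] at this
  obtain ⟨j₁, hj₁⟩ : ∃ j, n' = j + 1 := ⟨n' - 1, by omega⟩
  have hE1 : a ^ n' * b - c ^ n' • (b * a ^ n') ∈ Fm F ((L : ℤ) + (n : ℤ) - 1) := by
    have := E j₁
    rw [← hj₁] at this
    exact Fm_of_eq this (by push_cast [hLdef, hj₁]; ring)
  have hsub1 : (c ^ n' - 1) • (b * a ^ n') ∈ Fm F ((L : ℤ) + (n : ℤ) - 1) := by
    have := sub_mem hE1 hX1
    have heq : (a ^ n' * b - c ^ n' • (b * a ^ n')) - (a ^ n' * b - b * a ^ n')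
        = -((c ^ n' - 1) • (b * a ^ n')) := by
      rw [sub_smul, one_smul]; abel
    rw [heq] at this
    simpa using neg_mem this
  have hban : b * a ^ n' ≠ 0 := mul_ne_zero' hcover hdeg h1 hone hdim0 hb hpa.1
  have hcn : c ^ n' = 1 := by
    have hdban : fdeg F (b * a ^ n') = n + L := by
      rw [hdeg b _ hb hpa.1, hda, hn]
    have := scalar_eq_zero hcover hban (z := (L : ℤ) + (n : ℤ) - 1)
      (by rw [hdban]; push_cast; omega) hsub1
    exact sub_eq_zero.mp this
  -- second side: c ^ m' = 1
  have hS2 : a * b ^ m' - b ^ m' * a = a * w - w * a := by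
    rw [hba']
    simp only [mul_add, add_mul, mul_smul_comm, smul_mul_assoc]
    have hcomm : a * a ^ n' = a ^ n' * a := by
      rw [← pow_succ, ← pow_succ']
    rw [hcomm]; abel
  have hX2 : a * b ^ m' - b ^ m' * a ∈ Fm F ((m : ℤ) + (L : ℤ) - 1) := by
    rw [hS2]
    have h1' := Fm_mul hmul (mem_Fm_fdeg hcover a) hwmem
    have h2' := Fm_mul hmul hwmem (mem_Fm_fdeg hcover a)
    exact sub_mem (Fm_of_eq h1' (by push_cast [hm]; ring))
      (Fm_of_eq h2' (by push_cast [hm]; ring))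
  obtain ⟨j₂, hj₂⟩ : ∃ j, m' = j + 1 := ⟨m' - 1, by omega⟩
  have hE2 : a * b ^ m' - c ^ m' • (b ^ m' * a) ∈ Fm F ((m : ℤ) + (L : ℤ) - 1) := by
    have := E' j₂
    rw [← hj₂] at this
    have hLZ : ((j₂ : ℤ) + 1) * (n : ℤ) = (L : ℤ) := by
      have h5 : (m' * n : ℕ) = L := hL
      push_cast [← h5, hj₂]
      ring
    exact Fm_of_eq this (by linear_combination hLZ)
  have hsub2 : (c ^ m' - 1) • (b ^ m' * a) ∈ Fm F ((m : ℤ) + (L : ℤ) - 1) := by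
    have := sub_mem hE2 hX2
    have heq : (a * b ^ m' - c ^ m' • (b ^ m' * a)) - (a * b ^ m' - b ^ m' * a)
        = -((c ^ m' - 1) • (b ^ m' * a)) := by
      rw [sub_smul, one_smul]; abel
    rw [heq] at this
    simpa using neg_mem this
  have hbma : b ^ m' * a ≠ 0 := mul_ne_zero' hcover hdeg h1 hone hdim0 hpb.1 ha
  have hcm : c ^ m' = 1 := by
    have hdbma : fdeg F (b ^ m' * a) = L + m := by
      rw [hdeg _ a hpb.1 ha, hdb, hm]
    have := scalar_eq_zero hcover hbma (z := (m : ℤ) + (L : ℤ) - 1)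
      (by rw [hdbma]; push_cast; omega) hsub2
    exact sub_eq_zero.mp this
  -- Bezout
  have hcop : Nat.Coprime m' n' := by
    rw [hm'def, hn'def, hg]
    exact Nat.coprime_div_gcd_div_gcd hgpos
  have hCop : IsCoprime (m' : ℤ) (n' : ℤ) := by
    rw [Int.isCoprime_iff_gcd_eq_one]
    simpa [Int.gcd] using hcop
  obtain ⟨u, v, huv⟩ := hCop
  have hc1 : c = 1 := by
    have h2 : c ^ ((m' : ℤ) * u + (n' : ℤ) * v) = 1 := by
      rw [zpow_add₀ hc0, zpow_mul, zpow_mul, zpow_natCast, zpow_natCast,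
        hcm, hcn, one_zpow, one_zpow, one_mul]
    have h3 : (m' : ℤ) * u + (n' : ℤ) * v = 1 := by linear_combination huv
    rwa [h3, zpow_one] at h2
  rw [hc1, one_smul] at hc
  exact Fm_of_eq hc (by push_cast; ring)


lemma step (N : ℕ) (hN : 1 ≤ N) (hCd : CommDeg F N) : CommDeg F (N + 1) := by
  intro a b ha hb
  set m := fdeg F a with hm
  set n := fdeg F b with hn
  by_cases hr0 : a * b - b * a = 0
  · rw [hr0]; exact zero_mem _
  by_cases hm0 : m = 0
  · exact absurd (sub_eq_zero.mpr
      (comm_scalar hmono hone hmul hcover hdeg hdim0 hdim h1 hb hm0)) hr0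
  by_cases hn0 : n = 0
  · exact absurd (sub_eq_zero.mpr
      (comm_scalar hmono hone hmul hcover hdeg hdim0 hdim h1 ha hn0).symm) hr0
  set r := a * b - b * a with hrdef
  have hrm : r ∈ Fm F ((m : ℤ) + (n : ℤ) - (N : ℤ)) := hCd a b ha hb
  have hs0 : (0 : ℤ) ≤ (m : ℤ) + (n : ℤ) - (N : ℤ) := by
    by_contra hcon
    rw [Fm_neg (by omega), Submodule.mem_bot] at hrm
    exact hr0 hrm
  set s := m + n - N with hsdef
  have hsZ : (s : ℤ) = (m : ℤ) + (n : ℤ) - (N : ℤ) := by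
    push_cast [hsdef]; omega
  have hrs : r ∈ F s := by
    have := Fm_of_eq hrm hsZ.symm
    rwa [Fm_coe] at this
  have hrd1 : (fdeg F r : ℤ) ≤ (m : ℤ) + (n : ℤ) - 1 := by
    have hmem : r ∈ Fm F ((m : ℤ) + (n : ℤ) - 1) :=
      Fm_mono hmono (by omega) hrm
    exact fdeg_le_of_mem_Fm (by omega) hmem
  -- Leibniz expansion for powers of a
  have L1 : ∀ j : ℕ, a ^ (j + 1) * b - b * a ^ (j + 1) - ((j + 1 : ℕ) : k) • (a ^ j * r) ∈
      Fm F (((j : ℤ) + 1) * (m : ℤ) + (n : ℤ) - (N : ℤ) - 1) := by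
    intro j
    induction j with
    | zero =>
      have hz : a ^ 1 * b - b * a ^ 1 - ((1 : ℕ) : k) • (a ^ 0 * r) = 0 := by
        simp [hrdef]
      rw [hz]; exact zero_mem _
    | succ j ih =>
      have key : a ^ (j + 1 + 1) * b - b * a ^ (j + 1 + 1) -
          ((j + 1 + 1 : ℕ) : k) • (a ^ (j + 1) * r) =
          a * (a ^ (j + 1) * b - b * a ^ (j + 1) - ((j + 1 : ℕ) : k) • (a ^ j * r))
          - (a ^ (j + 1) * r - r * a ^ (j + 1)) := by
        have hcast : ((j + 1 + 1 : ℕ) : k) = ((j + 1 : ℕ) : k) + 1 := by push_cast; ring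
        rw [hcast, add_smul, one_smul, hrdef, pow_succ' a (j + 1), pow_succ' a j]
        simp only [mul_sub, sub_mul, mul_smul_comm, smul_mul_assoc, smul_sub, mul_assoc]
        abel
      rw [key]
      refine sub_mem ?_ ?_
      · have := Fm_mul hmul (mem_Fm_fdeg hcover a) ih
        exact Fm_of_eq this (by push_cast; ring)
      · have hane := (fdeg_pow hcover hdeg h1 hone hdim0 ha (j + 1)).1
        have hcomm := hCd (a ^ (j + 1)) r hane hr0
        rw [(fdeg_pow hcover hdeg h1 hone hdim0 ha (j + 1)).2] at hcomm
        refine Fm_mono hmono ?_ hcomm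
        push_cast
        nlinarith [hrd1]
  -- Leibniz expansion for powers of b
  have L1' : ∀ j : ℕ, a * b ^ (j + 1) - b ^ (j + 1) * a - ((j + 1 : ℕ) : k) • (b ^ j * r) ∈
      Fm F ((m : ℤ) + ((j : ℤ) + 1) * (n : ℤ) - (N : ℤ) - 1) := by
    intro j
    induction j with
    | zero =>
      have hz : a * b ^ 1 - b ^ 1 * a - ((1 : ℕ) : k) • (b ^ 0 * r) = 0 := by
        simp [hrdef]
      rw [hz]; exact zero_mem _
    | succ j ih =>
      have key : a * b ^ (j + 1 + 1) - b ^ (j + 1 + 1) * a -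
          ((j + 1 + 1 : ℕ) : k) • (b ^ (j + 1) * r) =
          (a * b ^ (j + 1) - b ^ (j + 1) * a - ((j + 1 : ℕ) : k) • (b ^ j * r)) * b
          + ((j + 1 : ℕ) : k) • (b ^ j * (r * b - b * r)) := by
        have hcast : ((j + 1 + 1 : ℕ) : k) = ((j + 1 : ℕ) : k) + 1 := by push_cast; ring
        rw [hcast, add_smul, one_smul, hrdef, pow_succ b (j + 1), pow_succ b j]
        simp only [mul_sub, sub_mul, mul_smul_comm, smul_mul_assoc, smul_sub, mul_assoc]
        abel
      rw [key]
      refine add_mem ?_ (Submodule.smul_mem _ _ ?_)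
      · have := Fm_mul hmul ih (mem_Fm_fdeg hcover b)
        exact Fm_of_eq this (by push_cast; ring)
      · have hbne := (fdeg_pow hcover hdeg h1 hone hdim0 hb j).1
        have hcomm := hCd b r hb hr0
        have hcomm' : r * b - b * r ∈ Fm F ((fdeg F b : ℤ) + (fdeg F r : ℤ) - (N : ℤ)) := by
          have := neg_mem hcomm
          simpa using this
        have hbj : b ^ j ∈ Fm F ((j : ℤ) * (n : ℤ)) := by
          have := mem_Fm_fdeg hcover (b ^ j)
          rw [(fdeg_pow hcover hdeg h1 hone hdim0 hb j).2] at this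
          exact Fm_of_eq this (by push_cast; ring)
        have := Fm_mul hmul hbj hcomm'
        refine Fm_mono hmono ?_ this
        push_cast
        nlinarith [hrd1]
  -- gcd setup
  set g := Nat.gcd m n with hg
  have hgpos : 0 < g := Nat.gcd_pos_of_pos_left n (by omega)
  obtain ⟨m₁, hm1⟩ := Nat.gcd_dvd_left m n
  obtain ⟨n₁, hn1⟩ := Nat.gcd_dvd_right m n
  set m' := m / g with hm'def
  set n' := n / g with hn'def
  have hm'eq : m' = m₁ := by rw [hm'def, hm1, Nat.mul_div_cancel_left _ hgpos]
  have hn'eq : n' = n₁ := by rw [hn'def, hn1, Nat.mul_div_cancel_left _ hgpos]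
  have hL : m' * n = n' * m := by
    rw [hm'eq, hn'eq]
    conv_lhs => rw [hn1]
    conv_rhs => rw [hm1]
    ring
  have hm'pos : 0 < m' := by
    rcases Nat.eq_zero_or_pos m' with h | h
    · rw [hm'eq] at h; rw [h, Nat.mul_zero] at hm1; omega
    · exact h
  have hn'pos : 0 < n' := by
    rcases Nat.eq_zero_or_pos n' with h | h
    · rw [hn'eq] at h; rw [h, Nat.mul_zero] at hn1; omega
    · exact h
  set L := n' * m with hLdef
  have hLpos : 0 < L := Nat.mul_pos hn'pos (by omega)
  have hpa := fdeg_pow hcover hdeg h1 hone hdim0 ha n'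
  have hpb := fdeg_pow hcover hdeg h1 hone hdim0 hb m'
  have hda : fdeg F (a ^ n') = L := hpa.2
  have hdb : fdeg F (b ^ m') = L := by rw [hpb.2, ← hL]
  obtain ⟨lam, hlam0, hwmem⟩ := exists_scale h1 hone hdim0 hdim L
    (by have := fdeg_mem hcover (b ^ m'); rwa [hdb] at this)
    (by have := fdeg_mem hcover (a ^ n'); rwa [hda] at this)
    (not_mem_Fm hpb.1 (by omega)) (not_mem_Fm hpa.1 (by omega))
  set w := b ^ m' - lam • a ^ n' with hwdef
  have hba' : b ^ m' = lam • a ^ n' + w := by rw [hwdef]; abel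
  obtain ⟨j₁, hj₁⟩ : ∃ j, n' = j + 1 := ⟨n' - 1, by omega⟩
  obtain ⟨j₂, hj₂⟩ : ∃ j, m' = j + 1 := ⟨m' - 1, by omega⟩
  have hLj₁ : ((j₁ : ℤ) + 1) * (m : ℤ) = (L : ℤ) := by
    have h5 : (n' * m : ℕ) = L := rfl
    push_cast [← h5, hj₁]
    ring
  have hLj₂ : ((j₂ : ℤ) + 1) * (n : ℤ) = (L : ℤ) := by
    have h5 : (m' * n : ℕ) = L := hL
    push_cast [← h5, hj₂]
    ring
  -- side 1
  have hS1 : lam • (a ^ n' * b - b * a ^ n') = b * w - w * b := by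
    rw [hwdef]
    simp only [mul_sub, sub_mul, smul_sub, mul_smul_comm, smul_mul_assoc]
    have hcomm : b ^ m' * b = b * b ^ m' := by rw [← pow_succ, ← pow_succ']
    rw [hcomm]; abel
  have hwcomm : b * w - w * b ∈ Fm F ((L : ℤ) + (n : ℤ) - (N : ℤ) - 1) := by
    by_cases hw0 : w = 0
    · rw [hw0, mul_zero, zero_mul, sub_self]; exact zero_mem _
    · have hfw : (fdeg F w : ℤ) ≤ (L : ℤ) - 1 :=
        fdeg_le_of_mem_Fm (by omega) hwmem
      have := hCd b w hb hw0
      have h2 : w * b - b * w ∈ Fm F ((fdeg F w : ℤ) + (n : ℤ) - (N : ℤ)) := by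
        rw [hn]
        have := neg_mem (hCd b w hb hw0)
        simpa [add_comm] using this
      have := neg_mem h2
      simp only [neg_sub] at this
      exact Fm_mono hmono (by omega) this
  have hX1 : a ^ n' * b - b * a ^ n' ∈ Fm F ((L : ℤ) + (n : ℤ) - (N : ℤ) - 1) := by
    have hmem : lam • (a ^ n' * b - b * a ^ n') ∈ Fm F ((L : ℤ) + (n : ℤ) - (N : ℤ) - 1) := by
      rw [hS1]; exact hwcomm
    have := Submodule.smul_mem _ lam⁻¹ hmem
    rwa [smul_smul, inv_mul_cancel₀ hlam0, one_smul] at this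
  have hB1 : ((n' : ℕ) : k) • (a ^ j₁ * r) ∈ Fm F ((L : ℤ) + (n : ℤ) - (N : ℤ) - 1) := by
    have hL1 := L1 j₁
    rw [← hj₁] at hL1
    have hL1' : a ^ n' * b - b * a ^ n' - ((n' : ℕ) : k) • (a ^ j₁ * r) ∈
        Fm F ((L : ℤ) + (n : ℤ) - (N : ℤ) - 1) :=
      Fm_of_eq hL1 (by rw [hLj₁])
    have := sub_mem hX1 hL1'
    simpa using this
  have hC1 : ((n' : ℕ) : k) • r ∈ Fm F ((s : ℤ) - 1) := by
    have haj := fdeg_pow hcover hdeg h1 hone hdim0 ha j₁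
    refine cancel_left hmono hcover hdeg h1 hone hdim0 haj.1 s
      (Submodule.smul_mem _ _ hrs) ?_
    rw [mul_smul_comm]
    refine Fm_of_eq hB1 ?_
    rw [haj.2, hsZ]
    push_cast
    linear_combination -hLj₁
  -- side 2
  have hS2 : a * b ^ m' - b ^ m' * a = a * w - w * a := by
    rw [hba']
    simp only [mul_add, add_mul, mul_smul_comm, smul_mul_assoc]
    have hcomm : a * a ^ n' = a ^ n' * a := by rw [← pow_succ, ← pow_succ']
    rw [hcomm]; abel
  have hX2 : a * b ^ m' - b ^ m' * a ∈ Fm F ((m : ℤ) + (L : ℤ) - (N : ℤ) - 1) := by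
    rw [hS2]
    by_cases hw0 : w = 0
    · rw [hw0, mul_zero, zero_mul, sub_self]; exact zero_mem _
    · have hfw : (fdeg F w : ℤ) ≤ (L : ℤ) - 1 :=
        fdeg_le_of_mem_Fm (by omega) hwmem
      have h7 := hCd a w ha hw0
      rw [← hm] at h7
      refine Fm_mono hmono ?_ h7
      omega
  have hB2 : ((m' : ℕ) : k) • (b ^ j₂ * r) ∈ Fm F ((m : ℤ) + (L : ℤ) - (N : ℤ) - 1) := by
    have hL2 := L1' j₂
    rw [← hj₂] at hL2
    have hL2' : a * b ^ m' - b ^ m' * a - ((m' : ℕ) : k) • (b ^ j₂ * r) ∈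
        Fm F ((m : ℤ) + (L : ℤ) - (N : ℤ) - 1) :=
      Fm_of_eq hL2 (by rw [hLj₂])
    have := sub_mem hX2 hL2'
    simpa using this
  have hC2 : ((m' : ℕ) : k) • r ∈ Fm F ((s : ℤ) - 1) := by
    have hbj := fdeg_pow hcover hdeg h1 hone hdim0 hb j₂
    refine cancel_left hmono hcover hdeg h1 hone hdim0 hbj.1 s
      (Submodule.smul_mem _ _ hrs) ?_
    rw [mul_smul_comm]
    refine Fm_of_eq hB2 ?_
    rw [hbj.2, hsZ]
    push_cast
    linear_combination -hLj₂
  -- Bezout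
  have hcop : Nat.Coprime m' n' := by
    rw [hm'def, hn'def, hg]
    exact Nat.coprime_div_gcd_div_gcd hgpos
  have hCop : IsCoprime (m' : ℤ) (n' : ℤ) := by
    rw [Int.isCoprime_iff_gcd_eq_one]
    simpa [Int.gcd] using hcop
  obtain ⟨u, v, huv⟩ := hCop
  have hfin : r ∈ Fm F ((s : ℤ) - 1) := by
    have hr1 : r = ((u : k) * (m' : ℕ)) • r + ((v : k) * (n' : ℕ)) • r := by
      rw [← add_smul]
      have hcst : ((u : k) * ((m' : ℕ) : k) + (v : k) * ((n' : ℕ) : k)) = 1 := by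
        have h6 := congrArg (fun z : ℤ => (z : k)) huv
        push_cast at h6
        linear_combination h6
      rw [hcst, one_smul]
    rw [hr1, mul_smul, mul_smul]
    exact add_mem (Submodule.smul_mem _ _ hC2) (Submodule.smul_mem _ _ hC1)
  refine Fm_of_eq hfin (by rw [hsZ]; push_cast; ring)


lemma allComm : ∀ N : ℕ, CommDeg F (N + 1) := by
  intro N
  induction N with
  | zero => exact base hmono hone hmul hcover hdeg hdim0 hdim h1
  | succ N ih =>
    exact step hmono hone hmul hcover hdeg hdim0 hdim h1 (N + 1) (by omega) ih

end Main

end BergmanAux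

/-- Bergman's commutativity criterion: a filtered algebra whose degree function
is additive on nonzero elements and whose associated graded components are at
most one-dimensional is commutative. -/
theorem filtered_algebra_commutative_of_graded_dim_le_one {k C : Type*}
    [Field k] [Ring C] [Algebra k C]
    (F : ℕ → Submodule k C)
    (hmono : Monotone F) (hone : (1 : C) ∈ F 0)
    (hmul : ∀ i j : ℕ, ∀ a ∈ F i, ∀ b ∈ F j, a * b ∈ F (i + j))
    (hcover : ∀ a : C, ∃ i, a ∈ F i)
    (hdeg : ∀ a b : C, a ≠ 0 → b ≠ 0 → fdeg F (a * b) = fdeg F a + fdeg F b)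
    (hdim0 : Module.rank k ↥(F 0) ≤ 1)
    (hdim : ∀ n : ℕ,
      Module.rank k
        (↥(F (n + 1)) ⧸ Submodule.comap (F (n + 1)).subtype (F n)) ≤ 1) :
    ∀ a b : C, a * b = b * a := by
  intro a b
  by_cases h1 : (1 : C) = 0
  · have hz : ∀ x : C, x = 0 := fun x => by rw [← mul_one x, h1, mul_zero]
    rw [hz (a * b), hz (b * a)]
  by_cases ha : a = 0
  · rw [ha, zero_mul, mul_zero]
  by_cases hb : b = 0
  · rw [hb, zero_mul, mul_zero]
  have hcomm := BergmanAux.allComm hmono hone hmul hcover hdeg hdim0 hdim h1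
    (fdeg F a + fdeg F b) a b ha hb
  rw [BergmanAux.Fm_neg (by push_cast; omega), Submodule.mem_bot] at hcomm
  exact sub_eq_zero.mp hcomm
end

section
/- In the coproduct monoid ⟨X⟩ * [Y] of a free monoid and a free abelian monoid, if vw = v'w' with |v| = |v'| and |w| = |w'|, then v ∼ v' and w ∼ w', where u ∼ u' means |u| = |u'| and either both u, u' lie in [Y], or writing u = p(u)u₁s(u) and u' = p(u')u₁'s(u') (with p the commuting prefix, s the commuting suffix), one has |p(u)| = |p(u')|, u₁ = u₁', and |s(u)| = |s(u')|. -/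
/-- Words over `X ⊔ Y`. -/
abbrev FM (X Y : Type) := FreeMonoid (X ⊕ Y)

/-- Swapping two adjacent `Y`-letters. -/
def yRel (X Y : Type) : FM X Y → FM X Y → Prop := fun a b =>
  ∃ (u v : FM X Y) (y₁ y₂ : Y),
    a = u * FreeMonoid.of (Sum.inr y₁) * FreeMonoid.of (Sum.inr y₂) * v ∧
    b = u * FreeMonoid.of (Sum.inr y₂) * FreeMonoid.of (Sum.inr y₁) * v

/-- The congruence generated by swaps of adjacent `Y`-letters. -/
def coCon (X Y : Type) : Con (FM X Y) := conGen (yRel X Y)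

/-- The coproduct monoid `⟨X⟩ * [Y]`. -/
abbrev CoprodM (X Y : Type) := (coCon X Y).Quotient

/-- Length descends to the quotient. -/
def lenHom (X Y : Type) : CoprodM X Y →* Multiplicative ℕ :=
  Con.lift _ (FreeMonoid.lift fun _ => Multiplicative.ofAdd 1) (by
    refine Con.conGen_le.mpr ?_
    rintro a b ⟨u, v, y₁, y₂, rfl, rfl⟩
    simp [Con.ker_rel, map_mul])

/-- Length of an element of the coproduct monoid. -/
def len {X Y : Type} (w : CoprodM X Y) : ℕ := Multiplicative.toAdd (lenHom X Y w)

/-- A monoid recording the commuting prefix and suffix. -/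
inductive PS (Y : Type) where
  | pure : Multiset Y → PS Y
  | mixed : Multiset Y → Multiset Y → PS Y

def PS.mul {Y : Type} : PS Y → PS Y → PS Y
  | .pure c, .pure d => .pure (c + d)
  | .pure c, .mixed p s => .mixed (c + p) s
  | .mixed p s, .pure d => .mixed p (s + d)
  | .mixed p _, .mixed _ s' => .mixed p s'

instance {Y : Type} : Monoid (PS Y) where
  mul := PS.mul
  one := .pure 0
  mul_assoc a b c := by
    rcases a <;> rcases b <;> rcases c <;>
      simp [(· * ·), PS.mul, add_assoc]
  one_mul a := by rcases a <;> simp [(· * ·), PS.mul]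
  mul_one a := by rcases a <;> simp [(· * ·), PS.mul]

/-- The prefix/suffix data descends to the quotient. -/
def psHom (X Y : Type) : CoprodM X Y →* PS Y :=
  Con.lift _ (FreeMonoid.lift fun a =>
      match a with
      | Sum.inl _ => PS.mixed 0 0
      | Sum.inr y => PS.pure {y}) (by
    refine Con.conGen_le.mpr ?_
    rintro a b ⟨u, v, y₁, y₂, rfl, rfl⟩
    have key : (PS.pure {y₁} : PS Y) * PS.pure {y₂} = PS.pure {y₂} * PS.pure {y₁} := by
      show PS.mul _ _ = PS.mul _ _
      simp [PS.mul, add_comm]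
    simp only [Con.ker_rel, map_mul, FreeMonoid.lift_eval_of]
    rw [mul_assoc _ (PS.pure {y₁}), key, mul_assoc, ← mul_assoc, ← mul_assoc])

/-- The commuting prefix of an element, as a multiset of `Y`-variables. -/
def pre {X Y : Type} (w : CoprodM X Y) : Multiset Y :=
  match psHom X Y w with
  | .pure c => c
  | .mixed p _ => p

/-- The commuting suffix of an element, as a multiset of `Y`-variables. -/
def suf {X Y : Type} (w : CoprodM X Y) : Multiset Y :=
  match psHom X Y w with
  | .pure c => c
  | .mixed _ s => s

/-- The canonical embedding of the free abelian monoid `[Y]` (words in `Y`). -/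
def yEmb (X Y : Type) : FreeMonoid Y →* CoprodM X Y :=
  (Con.mk' (coCon X Y)).comp (FreeMonoid.map Sum.inr)

/-- An element is pure if it involves only `Y`-variables. -/
def IsPure {X Y : Type} (w : CoprodM X Y) : Prop := w ∈ MonoidHom.mrange (yEmb X Y)

/-- The pure element of the coproduct monoid corresponding to a multiset of
`Y`-variables. -/
noncomputable def pureElt {X Y : Type} (c : Multiset Y) : CoprodM X Y :=
  yEmb X Y (FreeMonoid.ofList c.toList)

/-- The equivalence relation `∼`: equal lengths and either both pure, or equal
prefix lengths, equal middle parts and equal suffix lengths. -/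
noncomputable def Sim {X Y : Type} (u v : CoprodM X Y) : Prop :=
  len u = len v ∧
  ((IsPure u ∧ IsPure v) ∨
    (¬ IsPure u ∧ ¬ IsPure v ∧
      Multiset.card (pre u) = Multiset.card (pre v) ∧
      Multiset.card (suf u) = Multiset.card (suf v) ∧
      ∃ m : CoprodM X Y,
        u = pureElt (pre u) * m * pureElt (suf u) ∧
        v = pureElt (pre v) * m * pureElt (suf v)))



section Aux

variable {X Y : Type}

/-- Full normal form: either a pure multiset of `Y`-letters, or a prefix
multiset, a first `X`-letter, a list of (multiset, `X`-letter) blocks, and a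
suffix multiset. -/
inductive NF (X Y : Type) where
  | pure : Multiset Y → NF X Y
  | mixed : Multiset Y → X → List (Multiset Y × X) → Multiset Y → NF X Y

def NF.mul : NF X Y → NF X Y → NF X Y
  | .pure c, .pure d => .pure (c + d)
  | .pure c, .mixed p x l s => .mixed (c + p) x l s
  | .mixed p x l s, .pure d => .mixed p x l (s + d)
  | .mixed p x l s, .mixed p' x' l' s' => .mixed p x (l ++ (s + p', x') :: l') s'

instance : Monoid (NF X Y) where
  mul := NF.mul
  one := .pure 0
  mul_assoc a b c := by
    rcases a <;> rcases b <;> rcases c <;>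
      simp [(· * ·), NF.mul, add_assoc]
  one_mul a := by rcases a <;> simp [(· * ·), NF.mul]
  mul_one a := by rcases a <;> simp [(· * ·), NF.mul]

lemma NF.pure_mul_pure (c d : Multiset Y) :
    (NF.pure c * NF.pure d : NF X Y) = NF.pure (c + d) := rfl

lemma NF.pure_mul_mixed (c p : Multiset Y) (x : X) (l : List (Multiset Y × X))
    (s : Multiset Y) : (NF.pure c * NF.mixed p x l s : NF X Y) = NF.mixed (c + p) x l s := rfl

lemma NF.mixed_mul_pure (p : Multiset Y) (x : X) (l : List (Multiset Y × X))
    (s d : Multiset Y) : (NF.mixed p x l s * NF.pure d : NF X Y) = NF.mixed p x l (s + d) := rfl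

lemma NF.mixed_mul_mixed (p : Multiset Y) (x : X) (l : List (Multiset Y × X))
    (s p' : Multiset Y) (x' : X) (l' : List (Multiset Y × X)) (s' : Multiset Y) :
    (NF.mixed p x l s * NF.mixed p' x' l' s' : NF X Y)
      = NF.mixed p x (l ++ (s + p', x') :: l') s' := rfl

def nfGen : X ⊕ Y → NF X Y
  | Sum.inl x => .mixed 0 x [] 0
  | Sum.inr y => .pure {y}

def nf (X Y : Type) : CoprodM X Y →* NF X Y :=
  Con.lift _ (FreeMonoid.lift nfGen) (by
    refine Con.conGen_le.mpr ?_
    rintro a b ⟨u, v, y₁, y₂, rfl, rfl⟩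
    have key : (NF.pure {y₁} : NF X Y) * NF.pure {y₂} = NF.pure {y₂} * NF.pure {y₁} := by
      show NF.mul _ _ = NF.mul _ _
      simp [NF.mul, add_comm]
    simp only [Con.ker_rel, map_mul, FreeMonoid.lift_eval_of, nfGen]
    rw [mul_assoc _ (NF.pure {y₁}), key, mul_assoc, ← mul_assoc, ← mul_assoc])

lemma nf_coe (u : FM X Y) : nf X Y (u : CoprodM X Y) = FreeMonoid.lift nfGen u :=
  rfl

/-- block sum of lengths -/
def bS (l : List (Multiset Y × X)) : ℕ := (l.map fun e => 1 + Multiset.card e.1).sum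

@[simp] lemma bS_nil : bS ([] : List (Multiset Y × X)) = 0 := rfl

@[simp] lemma bS_cons (e : Multiset Y × X) (l : List (Multiset Y × X)) :
    bS (e :: l) = 1 + Multiset.card e.1 + bS l := by
  simp [bS, add_assoc]

@[simp] lemma bS_append (l l' : List (Multiset Y × X)) :
    bS (l ++ l') = bS l + bS l' := by
  simp [bS]

def nfLen : NF X Y → ℕ
  | .pure c => Multiset.card c
  | .mixed p _ l s => Multiset.card p + 1 + bS l + Multiset.card s

lemma nfLen_mul (a b : NF X Y) : nfLen (a * b) = nfLen a + nfLen b := by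
  rcases a with c | ⟨p, x, l, s⟩ <;> rcases b with d | ⟨p', x', l', s'⟩ <;>
    (show nfLen (NF.mul _ _) = _) <;> simp [NF.mul, nfLen] <;> omega

def psOf : NF X Y → PS Y
  | .pure c => .pure c
  | .mixed p _ _ s => .mixed p s

lemma psOf_mul (a b : NF X Y) : psOf (a * b) = psOf a * psOf b := by
  rcases a <;> rcases b <;> rfl

lemma psHom_nf (w : CoprodM X Y) : psHom X Y w = psOf (nf X Y w) := by
  refine Con.induction_on w ?_
  intro u
  refine FreeMonoid.recOn u ?_ ?_
  · rfl
  · intro x xs ih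
    rw [Con.coe_mul, map_mul, map_mul, psOf_mul, ih]
    congr 1
    cases x with
    | inl x => rfl
    | inr y => rfl

lemma lenHom_nf (w : CoprodM X Y) :
    lenHom X Y w = Multiplicative.ofAdd (nfLen (nf X Y w)) := by
  refine Con.induction_on w ?_
  intro u
  refine FreeMonoid.recOn u ?_ ?_
  · rfl
  · intro x xs ih
    rw [Con.coe_mul, map_mul, map_mul, nfLen_mul, ih]
    have h1 : lenHom X Y ((FreeMonoid.of x : FM X Y) : CoprodM X Y)
        = Multiplicative.ofAdd (nfLen (nf X Y ((FreeMonoid.of x : FM X Y) : CoprodM X Y))) := by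
      cases x with
      | inl x => rfl
      | inr y => rfl
    rw [h1, ← ofAdd_add]

lemma len_nf (w : CoprodM X Y) : len w = nfLen (nf X Y w) := by
  rw [len, lenHom_nf]
  rfl

lemma yEmb_swap (a b : Y) (t : List Y) :
    yEmb X Y (FreeMonoid.ofList (a :: b :: t)) = yEmb X Y (FreeMonoid.ofList (b :: a :: t)) := by
  show ((FreeMonoid.map Sum.inr (FreeMonoid.ofList (a :: b :: t)) : FM X Y) : CoprodM X Y)
      = ((FreeMonoid.map Sum.inr (FreeMonoid.ofList (b :: a :: t)) : FM X Y) : CoprodM X Y)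
  rw [Con.eq]
  exact ConGen.Rel.of _ _
    ⟨1, FreeMonoid.map Sum.inr (FreeMonoid.ofList t), a, b, rfl, rfl⟩

lemma yEmb_perm {l l' : List Y} (h : l.Perm l') :
    yEmb X Y (FreeMonoid.ofList l) = yEmb X Y (FreeMonoid.ofList l') := by
  induction h with
  | nil => rfl
  | cons a h ih =>
    have hc : ∀ t : List Y, FreeMonoid.ofList (a :: t) = FreeMonoid.of a * FreeMonoid.ofList t :=
      fun _ => rfl
    rw [hc, hc, map_mul, map_mul, ih]
  | swap a b t => exact yEmb_swap b a t
  | trans _ _ ih1 ih2 => rw [ih1, ih2]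

lemma pureElt_zero : (pureElt (0 : Multiset Y) : CoprodM X Y) = 1 := by
  show yEmb X Y (FreeMonoid.ofList (Multiset.toList 0)) = 1
  rw [Multiset.toList_zero]
  exact map_one _

lemma pureElt_add (c d : Multiset Y) :
    (pureElt (c + d) : CoprodM X Y) = pureElt c * pureElt d := by
  show yEmb X Y _ = yEmb X Y _ * yEmb X Y _
  rw [← map_mul]
  refine yEmb_perm ?_
  refine Multiset.coe_eq_coe.mp ?_
  show ((c + d).toList : Multiset Y) = ((c.toList ++ d.toList : List Y) : Multiset Y)
  rw [← Multiset.coe_add, Multiset.coe_toList, Multiset.coe_toList, Multiset.coe_toList]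

lemma pureElt_single (y : Y) :
    (pureElt ({y} : Multiset Y) : CoprodM X Y)
      = ((FreeMonoid.of (Sum.inr y) : FM X Y) : CoprodM X Y) := by
  show yEmb X Y _ = _
  have h1 : ({y} : Multiset Y).toList.Perm [y] := by
    refine Multiset.coe_eq_coe.mp ?_
    simp
  rw [yEmb_perm h1]
  rfl

noncomputable def qq : NF X Y → CoprodM X Y
  | .pure c => pureElt c
  | .mixed p x l s =>
      pureElt p * ((FreeMonoid.of (Sum.inl x) : FM X Y) : CoprodM X Y)
        * (l.map fun e => pureElt e.1
            * ((FreeMonoid.of (Sum.inl e.2) : FM X Y) : CoprodM X Y)).prod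
        * pureElt s

lemma qq_pure (c : Multiset Y) : (qq (NF.pure c) : CoprodM X Y) = pureElt c := rfl

lemma qq_mixed (p : Multiset Y) (x : X) (l : List (Multiset Y × X)) (s : Multiset Y) :
    (qq (NF.mixed p x l s) : CoprodM X Y)
      = pureElt p * ((FreeMonoid.of (Sum.inl x) : FM X Y) : CoprodM X Y)
        * (l.map fun e => pureElt e.1
            * ((FreeMonoid.of (Sum.inl e.2) : FM X Y) : CoprodM X Y)).prod
        * pureElt s := rfl

lemma nfGen_inl (x : X) : (nfGen (Sum.inl x) : NF X Y) = NF.mixed 0 x [] 0 := rfl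

lemma nfGen_inr (y : Y) : (nfGen (Sum.inr y) : NF X Y) = NF.pure {y} := rfl

lemma qq_gen_mul (a : X ⊕ Y) (n : NF X Y) :
    qq ((nfGen a : NF X Y) * n) = ((FreeMonoid.of a : FM X Y) : CoprodM X Y) * qq n := by
  cases a with
  | inr y =>
    cases n with
    | pure d =>
      rw [nfGen_inr, NF.pure_mul_pure, qq_pure, qq_pure, pureElt_add, pureElt_single]
    | mixed p x l s =>
      rw [nfGen_inr, NF.pure_mul_mixed, qq_mixed, qq_mixed, pureElt_add, pureElt_single]
      simp only [mul_assoc]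
  | inl x =>
    cases n with
    | pure d =>
      rw [nfGen_inl, NF.mixed_mul_pure, qq_mixed, qq_pure, pureElt_zero, zero_add]
      simp
    | mixed p x' l' s' =>
      rw [nfGen_inl, NF.mixed_mul_mixed, qq_mixed, qq_mixed, pureElt_zero, zero_add,
        List.nil_append, List.map_cons, List.prod_cons]
      simp only [mul_assoc, one_mul]

lemma qq_nf (w : CoprodM X Y) : qq (nf X Y w) = w := by
  refine Con.induction_on w ?_
  intro u
  refine FreeMonoid.recOn u ?_ ?_
  · show qq (nf X Y 1) = _
    rw [map_one]
    show qq (NF.pure 0) = _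
    rw [qq_pure, pureElt_zero]
    rfl
  · intro x xs ih
    rw [Con.coe_mul, map_mul]
    have h1 : nf X Y ((FreeMonoid.of x : FM X Y) : CoprodM X Y) = nfGen x := by
      cases x with
      | inl x => rfl
      | inr y => rfl
    rw [h1, qq_gen_mul, ih]

lemma qq_decomp (p : Multiset Y) (x : X) (l : List (Multiset Y × X)) (s : Multiset Y) :
    (qq (NF.mixed p x l s) : CoprodM X Y)
      = pureElt p * qq (NF.mixed 0 x l 0) * pureElt s := by
  rw [qq_mixed, qq_mixed, pureElt_zero]
  simp [mul_assoc]

lemma isPure_of {u : CoprodM X Y} {c : Multiset Y} (h : nf X Y u = .pure c) :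
    IsPure u := by
  rw [← qq_nf u, h]
  show pureElt c ∈ _
  exact ⟨FreeMonoid.ofList c.toList, rfl⟩

lemma notPure_of {u : CoprodM X Y} {p : Multiset Y} {x : X} {l : List (Multiset Y × X)}
    {s : Multiset Y} (h : nf X Y u = .mixed p x l s) : ¬ IsPure u := by
  rintro ⟨g, rfl⟩
  have hp : ∃ c, nf X Y (yEmb X Y g) = NF.pure c := by
    refine FreeMonoid.recOn g ?_ ?_
    · exact ⟨0, by rw [map_one, map_one]; rfl⟩
    · rintro y ys ⟨c, hc⟩
      refine ⟨{y} + c, ?_⟩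
      rw [map_mul, map_mul, hc]
      have : nf X Y (yEmb X Y (FreeMonoid.of y)) = NF.pure {y} := rfl
      rw [this, NF.pure_mul_pure]
  obtain ⟨c, hc⟩ := hp
  rw [h] at hc
  cases hc

lemma pre_suf_of {u : CoprodM X Y} {p : Multiset Y} {x : X} {l : List (Multiset Y × X)}
    {s : Multiset Y} (h : nf X Y u = .mixed p x l s) : pre u = p ∧ suf u = s := by
  have h2 := psHom_nf u
  rw [h] at h2
  constructor
  · rw [pre, h2]; rfl
  · rw [suf, h2]; rfl

lemma sim_pure {u u' : CoprodM X Y} (hlen : len u = len u') {c c' : Multiset Y}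
    (h1 : nf X Y u = .pure c) (h2 : nf X Y u' = .pure c') : Sim u u' :=
  ⟨hlen, Or.inl ⟨isPure_of h1, isPure_of h2⟩⟩

lemma sim_mixed {u u' : CoprodM X Y} (hlen : len u = len u') {p s p' s' : Multiset Y}
    {x : X} {l : List (Multiset Y × X)}
    (h1 : nf X Y u = .mixed p x l s) (h2 : nf X Y u' = .mixed p' x l s')
    (hp : Multiset.card p = Multiset.card p') (hs : Multiset.card s = Multiset.card s') :
    Sim u u' := by
  obtain ⟨hp1, hs1⟩ := pre_suf_of h1
  obtain ⟨hp2, hs2⟩ := pre_suf_of h2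
  refine ⟨hlen, Or.inr ⟨notPure_of h1, notPure_of h2, ?_, ?_, qq (NF.mixed 0 x l 0), ?_, ?_⟩⟩
  · rw [hp1, hp2]; exact hp
  · rw [hs1, hs2]; exact hs
  · rw [hp1, hs1, ← qq_decomp, ← h1, qq_nf]
  · rw [hp2, hs2, ← qq_decomp, ← h2, qq_nf]

lemma list_split_cases {α : Type*} :
    ∀ (l l' : List α) (a a' : α) (t t' : List α), l ++ a :: t = l' ++ a' :: t' →
      (l = l' ∧ a = a' ∧ t = t') ∨ (∃ r, l' = l ++ a :: r) ∨ (∃ r, l = l' ++ a' :: r) := by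
  intro l
  induction l with
  | nil =>
    intro l' a a' t t' h
    cases l' with
    | nil =>
      simp only [List.nil_append, List.cons.injEq] at h
      exact Or.inl ⟨rfl, h.1, h.2⟩
    | cons b m =>
      simp only [List.nil_append, List.cons_append, List.cons.injEq] at h
      exact Or.inr (Or.inl ⟨m, by rw [h.1]; rfl⟩)
  | cons b m ih =>
    intro l' a a' t t' h
    cases l' with
    | nil =>
      simp only [List.nil_append, List.cons_append, List.cons.injEq] at h
      exact Or.inr (Or.inr ⟨m, by rw [h.1]; rfl⟩)
    | cons b' m' =>
      simp only [List.cons_append, List.cons.injEq] at h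
      rcases ih m' a a' t t' h.2 with ⟨h1, h2, h3⟩ | ⟨r, hr⟩ | ⟨r, hr⟩
      · exact Or.inl ⟨by rw [h.1, h1], h2, h3⟩
      · exact Or.inr (Or.inl ⟨r, by rw [h.1, hr]; rfl⟩)
      · exact Or.inr (Or.inr ⟨r, by rw [h.1, hr]; rfl⟩)

end Aux

/-- Lemma 3.5(i): if `vw = v'w'` with `|v| = |v'|` and `|w| = |w'|`, then
`v ∼ v'` and `w ∼ w'`. -/
theorem coprodM_sim_of_mul_eq {X Y : Type} (v w v' w' : CoprodM X Y)
    (h : v * w = v' * w') (hv : len v = len v') (hw : len w = len w') :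
    Sim v v' ∧ Sim w w' := by
  have H : nf X Y v * nf X Y w = nf X Y v' * nf X Y w' := by
    rw [← map_mul, ← map_mul, h]
  have hv2 : nfLen (nf X Y v) = nfLen (nf X Y v') := by rw [← len_nf, ← len_nf]; exact hv
  have hw2 : nfLen (nf X Y w) = nfLen (nf X Y w') := by rw [← len_nf, ← len_nf]; exact hw
  cases hA : nf X Y v with
  | pure c =>
    cases hA' : nf X Y v' with
    | pure c' =>
      rw [hA, hA'] at H hv2
      simp only [nfLen] at hv2
      refine ⟨sim_pure hv hA hA', ?_⟩
      cases hB : nf X Y w with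
      | pure d =>
        cases hB' : nf X Y w' with
        | pure d' => exact sim_pure hw hB hB'
        | mixed p' x' l' s' =>
          rw [hB, hB', NF.pure_mul_pure, NF.pure_mul_mixed] at H
          cases H
      | mixed p x l s =>
        cases hB' : nf X Y w' with
        | pure d' =>
          rw [hB, hB', NF.pure_mul_mixed, NF.pure_mul_pure] at H
          cases H
        | mixed p' x' l' s' =>
          rw [hB, hB', NF.pure_mul_mixed, NF.pure_mul_mixed] at H
          injection H with e1 e2 e3 e4
          subst e2; subst e3; subst e4
          have hc := congrArg Multiset.card e1
          simp only [Multiset.card_add] at hc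
          exact sim_mixed hw hB hB' (by omega) rfl
    | mixed p' x' l' s' =>
      exfalso
      rw [hA, hA'] at H hv2
      simp only [nfLen] at hv2
      cases hB : nf X Y w with
      | pure d =>
        rw [hB, NF.pure_mul_pure] at H
        cases hB' : nf X Y w' with
        | pure d' => rw [hB', NF.mixed_mul_pure] at H; cases H
        | mixed p2' x2' l2' s2' => rw [hB', NF.mixed_mul_mixed] at H; cases H
      | mixed p2 x2 l2 s2 =>
        rw [hB, NF.pure_mul_mixed] at H
        cases hB' : nf X Y w' with
        | pure d' =>
          rw [hB', NF.mixed_mul_pure] at H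
          injection H with e1 e2 e3 e4
          have hc := congrArg Multiset.card e1
          simp only [Multiset.card_add] at hc
          omega
        | mixed p2' x2' l2' s2' =>
          rw [hB', NF.mixed_mul_mixed] at H
          injection H with e1 e2 e3 e4
          have hc := congrArg Multiset.card e1
          simp only [Multiset.card_add] at hc
          omega
  | mixed p x l s =>
    cases hA' : nf X Y v' with
    | pure c' =>
      exfalso
      rw [hA, hA'] at H hv2
      simp only [nfLen] at hv2
      cases hB' : nf X Y w' with
      | pure d' =>
        rw [hB', NF.pure_mul_pure] at H
        cases hB : nf X Y w with
        | pure d => rw [hB, NF.mixed_mul_pure] at H; cases H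
        | mixed p2 x2 l2 s2 => rw [hB, NF.mixed_mul_mixed] at H; cases H
      | mixed p2' x2' l2' s2' =>
        rw [hB', NF.pure_mul_mixed] at H
        cases hB : nf X Y w with
        | pure d =>
          rw [hB, NF.mixed_mul_pure] at H
          injection H with e1 e2 e3 e4
          have hc := congrArg Multiset.card e1
          simp only [Multiset.card_add] at hc
          omega
        | mixed p2 x2 l2 s2 =>
          rw [hB, NF.mixed_mul_mixed] at H
          injection H with e1 e2 e3 e4
          have hc := congrArg Multiset.card e1
          simp only [Multiset.card_add] at hc
          omega
    | mixed p' x' l' s' =>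
      rw [hA, hA'] at H hv2
      simp only [nfLen] at hv2
      cases hB : nf X Y w with
      | pure d =>
        cases hB' : nf X Y w' with
        | pure d' =>
          rw [hB, hB', NF.mixed_mul_pure, NF.mixed_mul_pure] at H
          injection H with e1 e2 e3 e4
          subst e1; subst e2; subst e3
          rw [hB, hB'] at hw2
          simp only [nfLen] at hw2
          have hc := congrArg Multiset.card e4
          simp only [Multiset.card_add] at hc
          exact ⟨sim_mixed hv hA hA' rfl (by omega), sim_pure hw hB hB'⟩
        | mixed p2' x2' l2' s2' =>
          exfalso
          rw [hB, hB', NF.mixed_mul_pure, NF.mixed_mul_mixed] at H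
          injection H with e1 e2 e3 e4
          have hS := congrArg bS e3
          simp only [bS_append, bS_cons, Multiset.card_add] at hS
          have hc := congrArg Multiset.card e1
          omega
      | mixed p2 x2 l2 s2 =>
        cases hB' : nf X Y w' with
        | pure d' =>
          exfalso
          rw [hB, hB', NF.mixed_mul_mixed, NF.mixed_mul_pure] at H
          injection H with e1 e2 e3 e4
          have hS := congrArg bS e3
          simp only [bS_append, bS_cons, Multiset.card_add] at hS
          have hc := congrArg Multiset.card e1
          omega
        | mixed p2' x2' l2' s2' =>
          rw [hB, hB', NF.mixed_mul_mixed, NF.mixed_mul_mixed] at H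
          injection H with e1 e2 e3 e4
          subst e1; subst e2; subst e4
          rcases list_split_cases l l' _ _ l2 l2' e3 with ⟨hl, hm, ht⟩ | ⟨r, hr⟩ | ⟨r, hr⟩
          · subst hl; subst ht
            injection hm with hm1 hm2
            subst hm2
            have hc := congrArg Multiset.card hm1
            simp only [Multiset.card_add] at hc
            exact ⟨sim_mixed hv hA hA' rfl (by omega), sim_mixed hw hB hB' (by omega) rfl⟩
          · exfalso
            have hS := congrArg bS hr
            simp only [bS_append, bS_cons, Multiset.card_add] at hS
            omega
          · exfalso
            have hS := congrArg bS hr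
            simp only [bS_append, bS_cons, Multiset.card_add] at hS
            omega
end

section
/- Let u be a pure nonscalar element of R = k⟨X⟩ * k[Y], i.e., u ∈ k[Y] \ k. Then the centralizer of u in R is exactly k[Y]. -/
namespace Aux
open scoped Classical

variable {X Y : Type}

/-- Normal form: prefix multiset and alternating list. -/
structure Nw (X Y : Type) where
  c : Multiset Y
  L : List (X × Multiset Y)

/-- Add a multiset to the last block. -/
def addLast : List (X × Multiset Y) → Multiset Y → List (X × Multiset Y)
  | [], _ => []
  | [a], d => [(a.1, a.2 + d)]
  | a :: b :: t, d => a :: addLast (b :: t) d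

@[simp] theorem addLast_nil (d : Multiset Y) : addLast ([] : List (X × Multiset Y)) d = [] := rfl

theorem addLast_cons (a : X × Multiset Y) (K : List (X × Multiset Y)) (hK : K ≠ [])
    (d : Multiset Y) : addLast (a :: K) d = a :: addLast K d := by
  cases K with
  | nil => exact absurd rfl hK
  | cons b t => rfl

theorem addLast_concat (I : List (X × Multiset Y)) (x : X) (s d : Multiset Y) :
    addLast (I ++ [(x, s)]) d = I ++ [(x, s + d)] := by
  induction I with
  | nil => rfl
  | cons a t ih =>
    rw [List.cons_append, addLast_cons _ _ (by simp), ih, List.cons_append]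

theorem concat_decomp (L : List (X × Multiset Y)) (hL : L ≠ []) :
    ∃ I x s, L = I ++ [(x, s)] := by
  rcases List.eq_nil_or_concat L with h | ⟨J, a, rfl⟩
  · exact absurd h hL
  · exact ⟨J, a.1, a.2, by simp⟩

theorem addLast_append (I K : List (X × Multiset Y)) (hK : K ≠ []) (d : Multiset Y) :
    addLast (I ++ K) d = I ++ addLast K d := by
  obtain ⟨J, x, s, rfl⟩ := concat_decomp K hK
  rw [← List.append_assoc, addLast_concat, addLast_concat, List.append_assoc]

theorem addLast_addLast (L : List (X × Multiset Y)) (d e : Multiset Y) :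
    addLast (addLast L d) e = addLast L (d + e) := by
  rcases eq_or_ne L [] with rfl | hL
  · rfl
  · obtain ⟨J, x, s, rfl⟩ := concat_decomp L hL
    rw [addLast_concat, addLast_concat, addLast_concat, add_assoc]

@[simp] theorem addLast_zero (L : List (X × Multiset Y)) : addLast L 0 = L := by
  rcases eq_or_ne L [] with rfl | hL
  · rfl
  · obtain ⟨J, x, s, rfl⟩ := concat_decomp L hL
    rw [addLast_concat, add_zero]

theorem addLast_ne_nil (L : List (X × Multiset Y)) (hL : L ≠ []) (d : Multiset Y) :
    addLast L d ≠ [] := by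
  obtain ⟨J, x, s, rfl⟩ := concat_decomp L hL
  rw [addLast_concat]; simp

theorem length_addLast (L : List (X × Multiset Y)) (d : Multiset Y) :
    (addLast L d).length = L.length := by
  rcases eq_or_ne L [] with rfl | hL
  · rfl
  · obtain ⟨J, x, s, rfl⟩ := concat_decomp L hL
    rw [addLast_concat]; simp

def Nw.mul (n m : Nw X Y) : Nw X Y :=
  match n with
  | ⟨c, []⟩ => ⟨c + m.c, m.L⟩
  | ⟨c, a :: t⟩ => ⟨c, addLast (a :: t) m.c ++ m.L⟩

theorem Nw.mul_def (n m : Nw X Y) :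
    Nw.mul n m = if n.L = [] then ⟨n.c + m.c, m.L⟩ else ⟨n.c, addLast n.L m.c ++ m.L⟩ := by
  obtain ⟨c, L⟩ := n
  cases L with
  | nil => rfl
  | cons a t => simp [Nw.mul]

instance : Monoid (Nw X Y) where
  mul := Nw.mul
  one := ⟨0, []⟩
  one_mul n := by
    show Nw.mul ⟨0, []⟩ n = n
    rw [Nw.mul_def]; simp
  mul_one n := by
    show Nw.mul n ⟨0, []⟩ = n
    rw [Nw.mul_def]
    obtain ⟨c, L⟩ := n
    rcases eq_or_ne L [] with rfl | h
    · simp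
    · simp [h]
  mul_assoc a b c := by
    show Nw.mul (Nw.mul a b) c = Nw.mul a (Nw.mul b c)
    obtain ⟨ca, La⟩ := a; obtain ⟨cb, Lb⟩ := b; obtain ⟨cc, Lc⟩ := c
    rcases eq_or_ne La [] with rfl | ha
    · rcases eq_or_ne Lb [] with rfl | hb
      · simp [Nw.mul_def, add_assoc]
      · simp [Nw.mul_def, hb, addLast_ne_nil Lb hb]
    · rcases eq_or_ne Lb [] with rfl | hb
      · simp [Nw.mul_def, ha, addLast_ne_nil La ha, addLast_addLast]
      · simp [Nw.mul_def, ha, hb, addLast_ne_nil La ha, addLast_ne_nil Lb hb,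
          addLast_append _ _ (addLast_ne_nil Lb hb cc), addLast_append _ Lb hb]

theorem Nw.mul_def' (n m : Nw X Y) :
    n * m = if n.L = [] then ⟨n.c + m.c, m.L⟩ else ⟨n.c, addLast n.L m.c ++ m.L⟩ :=
  Nw.mul_def n m

@[simp] theorem Nw.one_def : (1 : Nw X Y) = ⟨0, []⟩ := rfl

theorem Nw.pure_mul (c : Multiset Y) (m : Nw X Y) :
    (⟨c, []⟩ : Nw X Y) * m = ⟨c + m.c, m.L⟩ := by rw [Nw.mul_def']; simp

theorem Nw.mul_pure (n : Nw X Y) (hn : n.L ≠ []) (d : Multiset Y) :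
    n * ⟨d, []⟩ = ⟨n.c, addLast n.L d⟩ := by
  rw [Nw.mul_def', if_neg hn]; simp

end Aux

namespace Aux
open scoped Classical
variable {X Y : Type}

/-- Generator images in `Nw`. -/
def gen : X ⊕ Y → Nw X Y
  | Sum.inl x => ⟨0, [(x, 0)]⟩
  | Sum.inr y => ⟨{y}, []⟩

/-- The normal form homomorphism. -/
def nf (X Y : Type) : CoprodM X Y →* Nw X Y :=
  Con.lift _ (FreeMonoid.lift gen) (by
    refine Con.conGen_le.mpr ?_
    rintro a b ⟨u, v, y₁, y₂, rfl, rfl⟩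
    have key : (gen (Sum.inr y₁) : Nw X Y) * gen (Sum.inr y₂)
        = gen (Sum.inr y₂) * gen (Sum.inr y₁) := by
      show (⟨{y₁}, []⟩ : Nw X Y) * ⟨{y₂}, []⟩ = (⟨{y₂}, []⟩ : Nw X Y) * ⟨{y₁}, []⟩
      rw [Nw.pure_mul, Nw.pure_mul]
      simp [add_comm]
    simp only [Con.ker_rel, map_mul, FreeMonoid.lift_eval_of]
    rw [mul_assoc (FreeMonoid.lift gen u), key, ← mul_assoc])

@[simp] theorem nf_mk (l : FM X Y) :
    nf X Y ((l : CoprodM X Y)) = FreeMonoid.lift gen l := rfl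

/-- A single X letter in `CoprodM`. -/
def xe (x : X) : CoprodM X Y := ((FreeMonoid.of (Sum.inl x) : FM X Y) : CoprodM X Y)

theorem yEmb_perm {l l' : List Y} (h : l.Perm l') :
    yEmb X Y (FreeMonoid.ofList l) = yEmb X Y (FreeMonoid.ofList l') := by
  induction h with
  | nil => rfl
  | cons a _ ih =>
      rw [FreeMonoid.ofList_cons, FreeMonoid.ofList_cons, map_mul, map_mul, ih]
  | swap a b l =>
      show (Con.mk' (coCon X Y)) (FreeMonoid.map Sum.inr (FreeMonoid.ofList (b :: a :: l)))
        = (Con.mk' (coCon X Y)) (FreeMonoid.map Sum.inr (FreeMonoid.ofList (a :: b :: l)))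
      refine (Con.eq _).2 (ConGen.Rel.of _ _ ?_)
      refine ⟨1, FreeMonoid.map Sum.inr (FreeMonoid.ofList l), b, a, ?_, ?_⟩ <;>
        simp [FreeMonoid.ofList_cons, mul_assoc]
  | trans _ _ ih₁ ih₂ => rw [ih₁, ih₂]

theorem pureElt_def (c : Multiset Y) :
    (pureElt c : CoprodM X Y) = yEmb X Y (FreeMonoid.ofList c.toList) := rfl

@[simp] theorem pureElt_zero : (pureElt (0 : Multiset Y) : CoprodM X Y) = 1 := by
  rw [pureElt_def]
  have : (0 : Multiset Y).toList = [] := by simp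
  rw [this]
  exact map_one _

theorem pureElt_add (c d : Multiset Y) :
    (pureElt (c + d) : CoprodM X Y) = pureElt c * pureElt d := by
  rw [pureElt_def, pureElt_def, pureElt_def, ← map_mul, ← FreeMonoid.ofList_append]
  refine yEmb_perm ?_
  rw [← Multiset.coe_eq_coe]
  rw [← Multiset.coe_add]
  simp [Multiset.coe_toList]

theorem pureElt_comm (c d : Multiset Y) :
    (pureElt c : CoprodM X Y) * pureElt d = pureElt d * pureElt c := by
  rw [← pureElt_add, ← pureElt_add, add_comm]

/-- Inverse map from normal forms back to the coproduct monoid. -/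
noncomputable def psi : Nw X Y → CoprodM X Y :=
  fun n => pureElt n.c * (n.L.map fun a => xe a.1 * pureElt a.2).prod

theorem psi_prod_addLast (L : List (X × Multiset Y)) (hL : L ≠ []) (d : Multiset Y) :
    ((addLast L d).map fun a => (xe a.1 : CoprodM X Y) * pureElt a.2).prod
      = (L.map fun a => (xe a.1 : CoprodM X Y) * pureElt a.2).prod * pureElt d := by
  obtain ⟨I, x, s, rfl⟩ := concat_decomp L hL
  rw [addLast_concat]
  simp [pureElt_add, mul_assoc]

theorem psi_mul (n m : Nw X Y) : psi (n * m) = psi n * psi m := by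
  obtain ⟨c, L⟩ := n
  rcases eq_or_ne L [] with rfl | hL
  · rw [Nw.pure_mul]
    simp only [psi, pureElt_add]
    simp [mul_assoc]
  · rw [Nw.mul_def', if_neg hL]
    simp only [psi]
    rw [List.map_append, List.prod_append, psi_prod_addLast L hL]
    simp [mul_assoc]

theorem psi_nf (w : CoprodM X Y) : psi (nf X Y w) = w := by
  induction w using Con.induction_on with
  | H l =>
    induction l using FreeMonoid.inductionOn' with
    | one =>
      show psi (nf X Y 1) = 1
      rw [map_one]
      show pureElt 0 * _ = 1
      simp
    | of_mul a b ih =>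
      have : ((FreeMonoid.of a * b : FM X Y) : CoprodM X Y)
          = ((FreeMonoid.of a : FM X Y) : CoprodM X Y) * (b : CoprodM X Y) := rfl
      rw [this, map_mul, psi_mul, ih]
      congr 1
      cases a with
      | inl x =>
        show psi ⟨0, [(x, 0)]⟩ = xe x
        show pureElt 0 * ((xe x : CoprodM X Y) * pureElt 0 * 1) = xe x
        simp
      | inr y =>
        show psi ⟨{y}, []⟩ = _
        show pureElt {y} * 1 = _
        rw [mul_one, pureElt_def]
        have : ({y} : Multiset Y).toList.Perm [y] := by
          rw [← Multiset.coe_eq_coe]; simp [Multiset.coe_toList]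
        rw [yEmb_perm this]
        rfl

theorem nf_injective : Function.Injective (nf X Y) :=
  Function.LeftInverse.injective psi_nf

@[simp] theorem nf_pureElt (c : Multiset Y) : nf X Y (pureElt c) = ⟨c, []⟩ := by
  rw [pureElt_def]
  have : ∀ l : List Y, nf X Y (yEmb X Y (FreeMonoid.ofList l)) = ⟨(l : Multiset Y), []⟩ := by
    intro l
    induction l with
    | nil => exact map_one _
    | cons a t ih =>
      rw [FreeMonoid.ofList_cons, map_mul, map_mul, ih]
      show Nw.mul (nf X Y (yEmb X Y (FreeMonoid.of a))) _ = _
      show Nw.mul ⟨{a}, []⟩ _ = _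
      rw [Nw.mul_def]
      simp
  rw [this, Multiset.coe_toList]

theorem isPure_iff (w : CoprodM X Y) : IsPure w ↔ (nf X Y w).L = [] := by
  constructor
  · rintro ⟨l, rfl⟩
    have : ∀ l : FreeMonoid Y, (nf X Y (yEmb X Y l)).L = [] := by
      intro l
      induction l using FreeMonoid.inductionOn' with
      | one => rw [map_one, map_one]; rfl
      | of_mul a b ih =>
        rw [map_mul, map_mul]
        show (Nw.mul _ _).L = []
        rw [Nw.mul_def]
        have ha : nf X Y (yEmb X Y (FreeMonoid.of a)) = ⟨{a}, []⟩ := rfl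
        rw [ha]
        simpa using ih
    exact this l
  · intro h
    have : w = pureElt (nf X Y w).c := by
      conv_lhs => rw [← psi_nf w]
      show pureElt (nf X Y w).c * _ = _
      rw [h]
      simp
    rw [this, pureElt_def]
    exact ⟨_, rfl⟩

theorem isPure_pureElt (c : Multiset Y) : IsPure (pureElt c : CoprodM X Y) := by
  rw [isPure_iff, nf_pureElt]

end Aux

namespace Aux
open scoped Classical
variable {X Y : Type} {k : Type} [Field k]

/-- If supports commute elementwise, the elements commute. -/
theorem commute_of_support {G : Type} [Monoid G] (F V : MonoidAlgebra k G)
    (h : ∀ w ∈ F.coeff.support, ∀ v ∈ V.coeff.support, w * v = v * w) : F * V = V * F := by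
  rw [MonoidAlgebra.mul_def, MonoidAlgebra.mul_def, Finsupp.sum_comm]
  refine Finsupp.sum_congr fun v hv => Finsupp.sum_congr fun w hw => ?_
  rw [h w hw v hv, mul_comm]

theorem mul_pure_eq_iff (w : Nw X Y) (c p S : Multiset Y) (I : List (X × Multiset Y)) (x : X) :
    w * ⟨c, []⟩ = ⟨p, I ++ [(x, S)]⟩ ↔ (c ≤ S ∧ w = ⟨p, I ++ [(x, S - c)]⟩) := by
  constructor
  · intro hmul
    obtain ⟨q, L⟩ := w
    rcases eq_or_ne L [] with rfl | hL
    · rw [Nw.pure_mul] at hmul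
      simpa using congrArg Nw.L hmul
    · rw [Nw.mul_pure _ hL] at hmul
      obtain ⟨J, y, r, rfl⟩ := concat_decomp L hL
      rw [addLast_concat] at hmul
      obtain ⟨h1, h2⟩ := Nw.mk.injEq .. ▸ hmul
      have hJ : J = I := by
        have := congrArg List.dropLast h2
        simpa using this
      have hyr : (y, r + c) = (x, S) := by
        have := congrArg List.getLast? h2
        simpa using this
      obtain ⟨hy, hr⟩ := Prod.mk.injEq .. ▸ hyr
      subst h1 hJ hy
      have hcS : c ≤ S := hr ▸ le_add_self
      refine ⟨hcS, ?_⟩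
      have : r = S - c := by rw [← hr, add_tsub_cancel_right]
      rw [this]
  · rintro ⟨hc, rfl⟩
    rw [Nw.mul_pure _ (by simp), addLast_concat, tsub_add_cancel_of_le hc]

theorem pure_mul_eq_iff (w : Nw X Y) (c : Multiset Y) (n : Nw X Y) :
    (⟨c, []⟩ : Nw X Y) * w = n ↔ (c ≤ n.c ∧ w = ⟨n.c - c, n.L⟩) := by
  rw [Nw.pure_mul]
  constructor
  · rintro rfl
    exact ⟨le_self_add, by simp [add_tsub_cancel_left]⟩
  · rintro ⟨hc, rfl⟩
    simp [add_tsub_cancel_of_le hc]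

/-- Coefficient of a product with a purely-supported right factor. -/
theorem mul_pure_apply (F V : MonoidAlgebra k (Nw X Y))
    (hV : ∀ v ∈ V.coeff.support, v.L = []) (p S : Multiset Y) (I : List (X × Multiset Y)) (x : X) :
    (F * V).coeff ⟨p, I ++ [(x, S)]⟩ =
      ∑ v ∈ V.coeff.support, (if v.c ≤ S then F.coeff ⟨p, I ++ [(x, S - v.c)]⟩ else 0) * V.coeff v := by
  rw [MonoidAlgebra.mul_apply, Finsupp.sum_comm]
  rw [Finsupp.sum]
  refine Finset.sum_congr rfl fun v hv => ?_
  have hvL : v = ⟨v.c, []⟩ := by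
    obtain ⟨vc, vL⟩ := v
    simp only [Nw.mk.injEq, true_and]
    exact hV _ hv
  have : ∀ w : Nw X Y, (w * v = ⟨p, I ++ [(x, S)]⟩) ↔ (v.c ≤ S ∧ w = ⟨p, I ++ [(x, S - v.c)]⟩) := by
    intro w; rw [hvL]; exact mul_pure_eq_iff w v.c p S I x
  simp_rw [this]
  by_cases hc : v.c ≤ S
  · simp only [hc, true_and]
    rw [Finsupp.sum_ite_eq']
    by_cases hmem : (⟨p, I ++ [(x, S - v.c)]⟩ : Nw X Y) ∈ F.coeff.support
    · simp [hmem]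
    · simp [hmem, Finsupp.notMem_support_iff.1 hmem]
  · simp only [hc, false_and, if_false]
    simp


/-- Coefficient of a product with a purely-supported left factor. -/
theorem pure_mul_apply (V F : MonoidAlgebra k (Nw X Y))
    (hV : ∀ v ∈ V.coeff.support, v.L = []) (n : Nw X Y) :
    (V * F).coeff n = ∑ v ∈ V.coeff.support, V.coeff v * (if v.c ≤ n.c then F.coeff ⟨n.c - v.c, n.L⟩ else 0) := by
  rw [MonoidAlgebra.mul_apply, Finsupp.sum]
  refine Finset.sum_congr rfl fun v hv => ?_
  have hvL : v = ⟨v.c, []⟩ := by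
    obtain ⟨vc, vL⟩ := v
    simp only [Nw.mk.injEq, true_and]
    exact hV _ hv
  have : ∀ w : Nw X Y, (v * w = n) ↔ (v.c ≤ n.c ∧ w = ⟨n.c - v.c, n.L⟩) := by
    intro w; conv_lhs => rw [hvL]
    exact pure_mul_eq_iff w v.c n
  simp_rw [this]
  by_cases hc : v.c ≤ n.c
  · simp only [hc, true_and]
    rw [Finsupp.sum_ite_eq']
    by_cases hmem : (⟨n.c - v.c, n.L⟩ : Nw X Y) ∈ F.coeff.support
    · simp [hmem]
    · simp [hmem, Finsupp.notMem_support_iff.1 hmem]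
  · simp only [hc, false_and, if_false]
    simp

/-- Convolution formula in the commutative world. -/
theorem addconv_apply (g h : AddMonoidAlgebra k (Multiset Y)) (S : Multiset Y) :
    (g * h).coeff S = ∑ c ∈ g.coeff.support, if c ≤ S then g.coeff c * h.coeff (S - c) else 0 := by
  rw [AddMonoidAlgebra.mul_apply, Finsupp.sum]
  refine Finset.sum_congr rfl fun c hc => ?_
  have : ∀ s : Multiset Y, (c + s = S) ↔ (c ≤ S ∧ s = S - c) := by
    intro s
    constructor
    · rintro rfl; exact ⟨le_self_add, by rw [add_tsub_cancel_left]⟩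
    · rintro ⟨hcS, rfl⟩; exact add_tsub_cancel_of_le hcS
  simp_rw [this]
  by_cases hcS : c ≤ S
  · simp only [hcS, true_and]
    rw [Finsupp.sum_ite_eq']
    by_cases hmem : S - c ∈ h.coeff.support
    · simp [hmem]
    · simp [hmem, Finsupp.notMem_support_iff.1 hmem]
  · simp only [hcS, false_and, if_false]
    simp

end Aux

namespace Aux
open scoped Classical
variable {X Y : Type} {k : Type} [Field k]

def lastM : Nw X Y → Multiset Y := fun n =>
  match n.L.getLast? with
  | some a => a.2
  | none => 0

theorem lastM_eq (n : Nw X Y) (I : List (X × Multiset Y)) (x : X) (s : Multiset Y)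
    (h : n.L = I ++ [(x, s)]) : lastM n = s := by
  simp [lastM, h, List.getLast?_concat]

theorem uniqueSums_multiset : UniqueSums (Multiset Y) :=
  (AddEquiv.uniqueSums_iff (Multiset.toFinsupp (α := Y))).mpr inferInstance

theorem core (U A : MonoidAlgebra k (Nw X Y))
    (hU : ∀ v ∈ U.coeff.support, v.L = []) (hUns : ∀ lam : k, U ≠ lam • 1)
    (hcomm : A * U = U * A) : ∀ n ∈ A.coeff.support, n.L = [] := by
  by_contra hA
  push_neg at hA
  obtain ⟨n₀, hn₀A, hn₀⟩ := hA
  set P : MonoidAlgebra k (Nw X Y) := MonoidAlgebra.ofCoeff (A.coeff.filter (fun n : Nw X Y => n.L = [])) with hP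
  set B : MonoidAlgebra k (Nw X Y) := MonoidAlgebra.ofCoeff (A.coeff.filter (fun n : Nw X Y => ¬ n.L = [])) with hB
  have hBapp : ∀ n : Nw X Y, n.L ≠ [] → B.coeff n = A.coeff n := fun n h =>
    Finsupp.filter_apply_pos _ _ h
  have hBsupp : ∀ n ∈ B.coeff.support, n.L ≠ [] := by
    intro n hn
    rw [hB, MonoidAlgebra.coeff_ofCoeff, Finsupp.support_filter, Finset.mem_filter] at hn
    exact hn.2
  have hsplit : P + B = A := MonoidAlgebra.coeff_injective (Finsupp.filter_pos_add_filter_neg A.coeff _)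
  have hPU : P * U = U * P := by
    refine commute_of_support P U fun w hw v hv => ?_
    have hwL : w.L = [] := by
      rw [hP, MonoidAlgebra.coeff_ofCoeff, Finsupp.support_filter, Finset.mem_filter] at hw
      exact hw.2
    have hw' : w = ⟨w.c, []⟩ := by
      obtain ⟨a, b⟩ := w; simp only [Nw.mk.injEq, true_and]; exact hwL
    have hv' : v = ⟨v.c, []⟩ := by
      obtain ⟨a, b⟩ := v; simp only [Nw.mk.injEq, true_and]; exact hU _ hv
    rw [hw', hv', Nw.pure_mul, Nw.pure_mul]
    simp [add_comm]
  have hBU : B * U = U * B := by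
    have h1 : (P + B) * U = U * (P + B) := by rw [hsplit, hcomm]
    rw [add_mul, mul_add, hPU] at h1
    exact add_left_cancel h1
  -- max of B
  have hn₀B : n₀ ∈ B.coeff.support := by
    rw [Finsupp.mem_support_iff, hBapp _ hn₀]
    exact Finsupp.mem_support_iff.1 hn₀A
  obtain ⟨ns, hnsB, hmaxB⟩ := Finset.exists_max_image B.coeff.support
    (fun n => (lastM n).card) ⟨n₀, hn₀B⟩
  obtain ⟨I, x, ss, hnL⟩ := concat_decomp ns.L (hBsupp _ hnsB)
  set t := Multiset.card ss with ht
  have hmax' : ∀ (q S : Multiset Y), t < Multiset.card S → B.coeff ⟨q, I ++ [(x, S)]⟩ = 0 := by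
    intro q S hS
    by_contra hne
    have hmem : (⟨q, I ++ [(x, S)]⟩ : Nw X Y) ∈ B.coeff.support := Finsupp.mem_support_iff.2 hne
    have h1 := hmaxB _ hmem
    rw [lastM_eq _ I x S rfl, lastM_eq ns I x ss hnL] at h1
    omega
  -- max of U
  have hU0 : U ≠ 0 := by
    intro h
    exact hUns 0 (by rw [h, zero_smul])
  obtain ⟨vs, hvsU, hmaxU⟩ := Finset.exists_max_image U.coeff.support
    (fun v => Multiset.card v.c) (Finsupp.support_nonempty_iff.2 (MonoidAlgebra.coeff_eq_zero.not.2 hU0))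
  set d := Multiset.card vs.c with hd
  have hd1 : 1 ≤ d := by
    by_contra hdlt
    have hall : ∀ v ∈ U.coeff.support, v = 1 := by
      intro v hv
      have h1 := hmaxU v hv
      have hc : v.c = 0 := by
        rw [← Multiset.card_eq_zero]
        omega
      have hL := hU v hv
      obtain ⟨a, b⟩ := v
      simp only at hc hL
      rw [Nw.one_def, hc, hL]
    refine hUns (U.coeff 1) ?_
    ext n
    by_cases h1 : n = 1
    · subst h1
      rw [MonoidAlgebra.coeff_smul_apply, MonoidAlgebra.one_def, MonoidAlgebra.coeff_single, Finsupp.single_apply]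
      simp
    · have hn : U.coeff n = 0 := by
        by_contra hne
        exact h1 (hall n (Finsupp.mem_support_iff.2 hne))
      rw [hn, MonoidAlgebra.coeff_smul_apply, MonoidAlgebra.one_def, MonoidAlgebra.coeff_single, Finsupp.single_apply,
        if_neg (fun h => h1 h.symm)]
      simp
  -- define g and h
  have hpinj : Function.Injective (fun c : Multiset Y => (⟨c, []⟩ : Nw X Y)) :=
    fun a b h => congrArg Nw.c h
  have hTinj : Function.Injective (fun s : Multiset Y => (⟨ns.c, I ++ [(x, s)]⟩ : Nw X Y)) := by
    intro a b hab
    have := congrArg lastM hab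
    rwa [lastM_eq _ I x a rfl, lastM_eq _ I x b rfl] at this
  set g : AddMonoidAlgebra k (Multiset Y) :=
    AddMonoidAlgebra.ofCoeff ((Finsupp.comapDomain (fun c : Multiset Y => (⟨c, []⟩ : Nw X Y)) U.coeff hpinj.injOn).filter
      (fun c => Multiset.card c = d)) with hg
  set h : AddMonoidAlgebra k (Multiset Y) :=
    AddMonoidAlgebra.ofCoeff ((Finsupp.comapDomain (fun s : Multiset Y => (⟨ns.c, I ++ [(x, s)]⟩ : Nw X Y)) B.coeff
      hTinj.injOn).filter (fun s => Multiset.card s = t)) with hh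
  have g_apply : ∀ c : Multiset Y, g.coeff c = if Multiset.card c = d then U.coeff ⟨c, []⟩ else 0 := by
    intro c
    rw [hg, AddMonoidAlgebra.coeff_ofCoeff, Finsupp.filter_apply]
    split_ifs with h1
    · rw [Finsupp.comapDomain_apply]
    · rfl
  have h_apply : ∀ s : Multiset Y,
      h.coeff s = if Multiset.card s = t then B.coeff ⟨ns.c, I ++ [(x, s)]⟩ else 0 := by
    intro s
    rw [hh, AddMonoidAlgebra.coeff_ofCoeff, Finsupp.filter_apply]
    split_ifs with h1
    · rw [Finsupp.comapDomain_apply]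
    · rfl
  have hgne : g ≠ 0 := by
    intro hz
    have h1 : g.coeff vs.c = U.coeff ⟨vs.c, []⟩ := by rw [g_apply, if_pos rfl]
    have h2 : (⟨vs.c, []⟩ : Nw X Y) = vs := by
      obtain ⟨a, b⟩ := vs
      simp only [Nw.mk.injEq, true_and]
      exact (hU _ hvsU).symm
    rw [hz, AddMonoidAlgebra.coeff_zero, Finsupp.zero_apply] at h1
    exact Finsupp.mem_support_iff.1 hvsU (by rw [← h2, ← h1])
  have hhne : h ≠ 0 := by
    intro hz
    have h1 : h.coeff ss = B.coeff ⟨ns.c, I ++ [(x, ss)]⟩ := by rw [h_apply, if_pos rfl]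
    have h2 : (⟨ns.c, I ++ [(x, ss)]⟩ : Nw X Y) = ns := by
      conv_rhs => rw [show ns = (⟨ns.c, ns.L⟩ : Nw X Y) from rfl, hnL]
    rw [hz, AddMonoidAlgebra.coeff_zero, Finsupp.zero_apply] at h1
    exact Finsupp.mem_support_iff.1 hnsB (by rw [← h2, ← h1])
  -- g * h = 0
  have hgh : g * h = 0 := by
    refine AddMonoidAlgebra.ext (Finsupp.ext fun S => ?_)
    rw [addconv_apply, AddMonoidAlgebra.coeff_zero, Finsupp.zero_apply]
    by_cases hS : Multiset.card S = t + d
    · have hBU0 : (U * B).coeff ⟨ns.c, I ++ [(x, S)]⟩ = 0 := by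
        rw [pure_mul_apply _ _ hU]
        refine Finset.sum_eq_zero fun v hv => ?_
        split_ifs with hvc
        · have hz : B.coeff ⟨ns.c - v.c, I ++ [(x, S)]⟩ = 0 := hmax' _ _ (by omega)
          show U.coeff v * B.coeff ⟨ns.c - v.c, I ++ [(x, S)]⟩ = 0
          rw [hz, mul_zero]
        · rw [mul_zero]
      have hterm : ∀ v ∈ U.coeff.support,
          (if v.c ≤ S then g.coeff v.c * h.coeff (S - v.c) else 0)
            = (if v.c ≤ S then B.coeff ⟨ns.c, I ++ [(x, S - v.c)]⟩ else 0) * U.coeff v := by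
        intro v hv
        split_ifs with hvc
        · have hcardsub : Multiset.card (S - v.c) + Multiset.card v.c = Multiset.card S := by
            have h1 : S - v.c + v.c = S := tsub_add_cancel_of_le hvc
            conv_rhs => rw [← h1]
            rw [Multiset.card_add]
          by_cases hcd : Multiset.card v.c = d
          · have hst : Multiset.card (S - v.c) = t := by omega
            rw [g_apply, if_pos hcd, h_apply, if_pos hst]
            have h2 : (⟨v.c, []⟩ : Nw X Y) = v := by
              obtain ⟨a, b⟩ := v
              simp only [Nw.mk.injEq, true_and]
              exact (hU _ hv).symm
            rw [h2, mul_comm]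
          · have hlt : Multiset.card v.c < d := lt_of_le_of_ne (hmaxU v hv) hcd
            have hz : B.coeff ⟨ns.c, I ++ [(x, S - v.c)]⟩ = 0 := hmax' _ _ (by omega)
            rw [g_apply, if_neg hcd, hz, zero_mul, zero_mul]
        · rw [zero_mul]
      have hsub : g.coeff.support ⊆ U.coeff.support.image Nw.c := by
        intro c hc
        have h1 := Finsupp.mem_support_iff.1 hc
        rw [g_apply] at h1
        by_cases hcd : Multiset.card c = d
        · rw [if_pos hcd] at h1
          exact Finset.mem_image.2 ⟨⟨c, []⟩, Finsupp.mem_support_iff.2 h1, rfl⟩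
        · rw [if_neg hcd] at h1
          exact absurd rfl h1
      calc ∑ c ∈ g.coeff.support, (if c ≤ S then g.coeff c * h.coeff (S - c) else 0)
          = ∑ c ∈ U.coeff.support.image Nw.c, (if c ≤ S then g.coeff c * h.coeff (S - c) else 0) := by
            refine Finset.sum_subset hsub fun c _ hc => ?_
            split_ifs with h1
            · rw [Finsupp.notMem_support_iff.1 hc, zero_mul]
            · rfl
        _ = ∑ v ∈ U.coeff.support, (if v.c ≤ S then g.coeff v.c * h.coeff (S - v.c) else 0) := by
            refine Finset.sum_image ?_
            intro v hv w hw hvw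
            have hv' : v = ⟨v.c, []⟩ := by
              obtain ⟨a, b⟩ := v; simp only [Nw.mk.injEq, true_and]; exact hU _ hv
            have hw' : w = ⟨w.c, []⟩ := by
              obtain ⟨a, b⟩ := w; simp only [Nw.mk.injEq, true_and]; exact hU _ hw
            rw [hv', hw', hvw]
        _ = ∑ v ∈ U.coeff.support, (if v.c ≤ S then B.coeff ⟨ns.c, I ++ [(x, S - v.c)]⟩ else 0) * U.coeff v :=
            Finset.sum_congr rfl hterm
        _ = (B * U).coeff ⟨ns.c, I ++ [(x, S)]⟩ := (mul_pure_apply B U hU ns.c S I x).symm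
        _ = (U * B).coeff ⟨ns.c, I ++ [(x, S)]⟩ := by rw [hBU]
        _ = 0 := hBU0
    · refine Finset.sum_eq_zero fun c hc => ?_
      split_ifs with hcS
      · have hcd : Multiset.card c = d := by
          have h1 := Finsupp.mem_support_iff.1 hc
          rw [g_apply] at h1
          by_contra h2
          rw [if_neg h2] at h1
          exact h1 rfl
        have hzz : h.coeff (S - c) = 0 := by
          rw [h_apply]
          rw [if_neg]
          intro hst
          have h1 : S - c + c = S := tsub_add_cancel_of_le hcS
          rw [← h1, Multiset.card_add] at hS
          omega
        rw [hzz, mul_zero]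
      · rfl
  haveI : UniqueSums (Multiset Y) := uniqueSums_multiset
  rcases mul_eq_zero.mp hgh with hcase | hcase
  · exact hgne hcase
  · exact hhne hcase

end Aux

/-- The centralizer of a pure nonscalar element of `k⟨X⟩ * k[Y]` is exactly
`k[Y]`. -/
theorem coprod_centralizer_of_pure {X Y k : Type} [Field k]
    (u : MonoidAlgebra k (CoprodM X Y))
    (hu_pure : ∀ w ∈ u.coeff.support, IsPure w)
    (hu_ns : ∀ lam : k, u ≠ lam • (1 : MonoidAlgebra k (CoprodM X Y))) :
    ∀ a : MonoidAlgebra k (CoprodM X Y),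
      a * u = u * a ↔ ∀ w ∈ a.coeff.support, IsPure w := by
  classical
  intro a
  constructor
  · intro hcomm w hw
    set Φ : MonoidAlgebra k (CoprodM X Y) →+* MonoidAlgebra k (Aux.Nw X Y) :=
      MonoidAlgebra.mapDomainRingHom k (Aux.nf X Y) with hΦ
    have hΦapp : ∀ F : MonoidAlgebra k (CoprodM X Y),
        Φ F = MonoidAlgebra.mapDomain (Aux.nf X Y) F := fun F => rfl
    have hΦinj : Function.Injective Φ := by
      intro F G hFG
      rw [hΦapp, hΦapp] at hFG
      exact MonoidAlgebra.mapDomain_injective Aux.nf_injective hFG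
    have hsupp : ∀ F : MonoidAlgebra k (CoprodM X Y),
        (Φ F).coeff.support = F.coeff.support.image (Aux.nf X Y) := fun F =>
      Finsupp.mapDomain_support_of_injective Aux.nf_injective F.coeff
    have hUs : ∀ v ∈ (Φ u).coeff.support, v.L = [] := by
      intro v hv
      rw [hsupp] at hv
      obtain ⟨w', hw', rfl⟩ := Finset.mem_image.1 hv
      exact (Aux.isPure_iff _).1 (hu_pure w' hw')
    have hUns' : ∀ lam : k, Φ u ≠ lam • 1 := by
      intro lam hEq
      refine hu_ns lam (hΦinj ?_)
      rw [hEq]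
      have h1 : Φ (lam • 1) = lam • Φ 1 := by
        rw [hΦapp, hΦapp]
        exact MonoidAlgebra.mapDomain_smul _ lam _
      rw [h1, map_one]
    have hcomm' : Φ a * Φ u = Φ u * Φ a := by
      rw [← map_mul, ← map_mul, hcomm]
    have hcore := Aux.core (Φ u) (Φ a) hUs hUns' hcomm'
    have hwmem : Aux.nf X Y w ∈ (Φ a).coeff.support := by
      rw [hsupp]
      exact Finset.mem_image_of_mem _ hw
    exact (Aux.isPure_iff w).2 (hcore _ hwmem)
  · intro hpure
    refine Aux.commute_of_support a u ?_
    intro w hw v hv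
    obtain ⟨l, rfl⟩ := hpure w hw
    obtain ⟨l', rfl⟩ := hu_pure v hv
    rw [← map_mul, ← map_mul]
    have h1 : l * l' = FreeMonoid.ofList (FreeMonoid.toList l ++ FreeMonoid.toList l') := rfl
    have h2 : l' * l = FreeMonoid.ofList (FreeMonoid.toList l' ++ FreeMonoid.toList l) := rfl
    rw [h1, h2]
    exact Aux.yEmb_perm List.perm_append_comm
end
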